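/- arXiv:1311.2542 — 3 statements merged into one kernel-verified Lean document; each statement's English description precedes it below -/
import Mathlib

section
/- Let A ∈ ℝ^{n×d}, b ∈ ℝ^n, let C ⊂ ℝ^d be a closed convex set, and let Φ ∈ ℝ^{m×n} be any matrix. Set f(x) = ‖Ax − b‖₂² and g(x) = ‖ΦAx − Φb‖₂². Let x_* minimize f over C and let x̂ minimize g over C, and assume Ax_* ≠ b. Set u = (Ax_* − b)/‖Ax_* − b‖₂, Z₁ = Z₁(A, Φ, T_C(x_*)) and Z₂ = Z₂(A, Φ, T_C(x_*), u), and assume Z₁ > 0. Then f(x̂) ≤ (1 + Z₂/Z₁)² f(x_*). Moreover, if x_* is a global minimizer of f over ℝ^d, then f(x̂) ≤ (1 + Z₂²/Z₁²) f(x_*). -/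
open MeasureTheory ProbabilityTheory
open scoped ENNReal NNReal

noncomputable section

namespace SDR

/-- Squared Euclidean norm. -/
def sqSum {ι : Type*} [Fintype ι] (v : ι → ℝ) : ℝ := ∑ i, v i ^ 2

/-- Euclidean norm. -/
def l2 {ι : Type*} [Fintype ι] (v : ι → ℝ) : ℝ := Real.sqrt (∑ i, v i ^ 2)

/-- Standard Gaussian measure on `ℝ^n`. -/
def stdGaussian (n : ℕ) : Measure (Fin n → ℝ) :=
  Measure.pi fun _ => gaussianReal 0 1

/-- Gaussian mean width of a subset of `ℝ^n`. -/
def gaussWidth {n : ℕ} (T : Set (Fin n → ℝ)) : ℝ :=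
  ∫ g, (⨆ x : T, ∑ j, g j * x.1 j) ∂stdGaussian n

/-- Bernoulli measure on `ℝ` with mean `p` (supported on `{0,1}`). -/
def bernoulliReal (p : ℝ) : Measure ℝ :=
  (Real.toNNReal (1 - p)) • Measure.dirac 0 + (Real.toNNReal p) • Measure.dirac 1

instance (p : ℝ) : IsFiniteMeasure (bernoulliReal p) := by
  unfold bernoulliReal; infer_instance

/-- Product of i.i.d. Bernoulli measures on `ℝ^n`. -/
def bernoulliPi (n : ℕ) (p : ℝ) : Measure (Fin n → ℝ) :=
  Measure.pi fun _ => bernoulliReal p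

/-- The complexity parameter `κ(T)`. -/
def kappa (m s : ℕ) {n : ℕ} (T : Set (Fin n → ℝ)) : ℝ :=
  ⨆ q : {q : ℝ // 1 ≤ q ∧ q ≤ ((m : ℝ) / s) * Real.log s},
    (1 / Real.sqrt (q.1 * s)) *
      (∫ η, (∫ g, (⨆ x : T, |∑ j, η j * g j * x.1 j|) ∂stdGaussian n) ^ q.1
        ∂bernoulliPi n (q.1 * s / (m * Real.log s))) ^ (1 / q.1)

/-- The random semi-norm `‖x‖_δ`. -/
def deltaNorm {m n : ℕ} (s : ℕ) (δ : Fin m → Fin n → ℝ) (x : Fin n → ℝ) : ℝ :=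
  (1 / Real.sqrt s) * ⨆ i : Fin m, Real.sqrt (∑ j, δ i j * x j ^ 2)

/-- Diameter of `T` under `‖·‖_δ`. -/
def deltaDiam {m n : ℕ} (s : ℕ) (δ : Fin m → Fin n → ℝ) (T : Set (Fin n → ℝ)) : ℝ :=
  ⨆ x : T, deltaNorm s δ x.1

/-- Talagrand's `γ₂` functional of a set `S` with respect to a (semi-)metric `ρ`. -/
def gamma2 {E : Type*} (S : Set E) (ρ : E → E → ℝ) : ℝ :=
  ⨅ A : {A : ℕ → Finset E // (∀ r : ℕ, ↑(A r) ⊆ S) ∧ (A 0).card = 1 ∧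
      (∀ r : ℕ, (A r).card ≤ 2 ^ 2 ^ r) ∧ ∀ r : ℕ, A r ⊆ A (r + 1)},
    ⨆ x : S, ∑' r : ℕ, (2 : ℝ) ^ ((r : ℝ) / 2) * ⨅ y : (A.1 r), ρ x.1 y.1

/-- The semi-norm `⦀x⦀_T = sup_{y ∈ T} |⟨x, y⟩|`. -/
def tnorm {n : ℕ} (T : Set (Fin n → ℝ)) (x : Fin n → ℝ) : ℝ :=
  ⨆ y : T, |∑ j, x j * y.1 j|

/-- The random 0/1 array underlying an SJLT with column sparsity `s`. -/
def IsSJLTDelta {Ω : Type*} [MeasurableSpace Ω] (μ : Measure Ω)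
    (m n s : ℕ) (δ : Ω → Fin m → Fin n → ℝ) : Prop :=
  (∀ i j, Measurable fun ω => δ ω i j) ∧
  (∀ ω i j, δ ω i j = 0 ∨ δ ω i j = 1) ∧
  (∀ ω j, ∑ i, δ ω i j = s) ∧
  (∀ (j : Fin n) (I : Finset (Fin m)),
    ∫ ω, ∏ i ∈ I, δ ω i j ∂μ ≤ ((s : ℝ) / m) ^ I.card) ∧
  iIndepFun (fun (j : Fin n) (ω : Ω) (i : Fin m) => δ ω i j) μ

/-- An i.i.d. Rademacher array. -/
def IsRademacherArray {Ω : Type*} [MeasurableSpace Ω] (μ : Measure Ω)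
    (m n : ℕ) (σ : Ω → Fin m → Fin n → ℝ) : Prop :=
  (∀ i j, Measurable fun ω => σ ω i j) ∧
  (∀ i j, μ {ω | σ ω i j = 1} = 1/2 ∧ μ {ω | σ ω i j = -1} = 1/2) ∧
  iIndepFun (fun (p : Fin m × Fin n) (ω : Ω) => σ ω p.1 p.2) μ

/-- A sparse Johnson–Lindenstrauss transform with `m` rows, `n` columns and
column sparsity `s`, realized on a probability space `(Ω, μ)`. -/
def IsSJLT {Ω : Type*} [MeasurableSpace Ω] (μ : Measure Ω)
    (m n s : ℕ) (σ δ : Ω → Fin m → Fin n → ℝ)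
    (Φ : Ω → Matrix (Fin m) (Fin n) ℝ) : Prop :=
  IsRademacherArray μ m n σ ∧ IsSJLTDelta μ m n s δ ∧
  IndepFun (fun ω => σ ω) (fun ω => δ ω) μ ∧
  ∀ ω i j, Φ ω i j = σ ω i j * δ ω i j / Real.sqrt s

/-- Covering number of `S` by balls of radius `u` (in the semi-norm `N`)
centered at points of `S`. -/
def covNum {n : ℕ} (S : Set (Fin n → ℝ)) (N : (Fin n → ℝ) → ℝ) (u : ℝ) : ℝ≥0∞ :=
  ⨅ F : {F : Finset (Fin n → ℝ) // ↑F ⊆ S ∧ ∀ x ∈ S, ∃ y ∈ F, N (x - y) ≤ u},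
    (F.1.card : ℝ≥0∞)

/-- Logarithm of the covering number. -/
def logCov {n : ℕ} (S : Set (Fin n → ℝ)) (N : (Fin n → ℝ) → ℝ) (u : ℝ) : ℝ :=
  Real.log (covNum S N u).toReal

/-- `N` is a semi-norm. -/
def IsSeminorm {n : ℕ} (N : (Fin n → ℝ) → ℝ) : Prop :=
  (∀ x y, N (x + y) ≤ N x + N y) ∧ ∀ (a : ℝ) (x), N (a • x) = |a| * N x

/-- `t` is an admissible type-2 constant for the semi-norm `N`. -/
def IsType2With {n : ℕ} (N : (Fin n → ℝ) → ℝ) (t : ℝ) : Prop :=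
  ∀ (k : ℕ) (x : Fin k → Fin n → ℝ),
    (∫ g, N (∑ α, g α • x α) ∂stdGaussian k) ≤ t * Real.sqrt (∑ α, N (x α) ^ 2)

/-- The type-2 constant of the semi-norm `N`. -/
def type2Const {n : ℕ} (N : (Fin n → ℝ) → ℝ) : ℝ :=
  sInf {t : ℝ | 0 ≤ t ∧ IsType2With N t}

/-- Diameter of `S` with respect to the semi-norm `N`. -/
def diamN {n : ℕ} (N : (Fin n → ℝ) → ℝ) (S : Set (Fin n → ℝ)) : ℝ :=
  ⨆ x : S, ⨆ y : S, N (x.1 - y.1)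

/-- The `ℓ_{2,1}` block norm on `ℝ^{b × D}`. -/
def norm21 {b D : ℕ} (x : Fin b × Fin D → ℝ) : ℝ :=
  ∑ ℓ : Fin b, Real.sqrt (∑ k : Fin D, x (ℓ, k) ^ 2)

/-- The norm `⦀A⦀` of a block matrix. -/
def blockNorm {n b D : ℕ} (A : Matrix (Fin n) (Fin b × Fin D) ℝ) : ℝ :=
  ⨆ ℓ : Fin b, Real.sqrt (∑ j : Fin n, ∑ k : Fin D, A j (ℓ, k) ^ 2)

/-- The norm `‖A‖_{ℓ_{2,1} → ℓ_∞}` of a block matrix. -/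
def norm21ToInf {n b D : ℕ} (A : Matrix (Fin n) (Fin b × Fin D) ℝ) : ℝ :=
  ⨆ j : Fin n, ⨆ ℓ : Fin b, Real.sqrt (∑ k : Fin D, A j (ℓ, k) ^ 2)

/-- The tangent cone of `C` at `x`: the closed cone generated by `C - {x}`. -/
def tangentCone {ι : Type*} [Fintype ι] (C : Set (ι → ℝ)) (x : ι → ℝ) : Set (ι → ℝ) :=
  closure {v | ∃ t : ℝ, 0 ≤ t ∧ ∃ y ∈ C, v = t • (y - x)}

/-- `Z₁(A, Φ, K) = inf_{v ∈ AK ∩ S^{n-1}} ‖Φ v‖₂²`. -/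
def Z1 {n m : ℕ} {ι : Type*} [Fintype ι] (A : Matrix (Fin n) ι ℝ)
    (Φ : Matrix (Fin m) (Fin n) ℝ) (K : Set (ι → ℝ)) : ℝ :=
  ⨅ v : {v : Fin n → ℝ // (∃ y ∈ K, A.mulVec y = v) ∧ ∑ i, v i ^ 2 = 1},
    ∑ i, (Φ.mulVec v.1 i) ^ 2

/-- `Z₂(A, Φ, K, u) = sup_{v ∈ AK ∩ S^{n-1}} |⟨Φu, Φv⟩ - ⟨u, v⟩|`. -/
def Z2 {n m : ℕ} {ι : Type*} [Fintype ι] (A : Matrix (Fin n) ι ℝ)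
    (Φ : Matrix (Fin m) (Fin n) ℝ) (K : Set (ι → ℝ)) (u : Fin n → ℝ) : ℝ :=
  ⨆ v : {v : Fin n → ℝ // (∃ y ∈ K, A.mulVec y = v) ∧ ∑ i, v i ^ 2 = 1},
    |(∑ i, Φ.mulVec u i * Φ.mulVec v.1 i) - ∑ i, u i * v.1 i|

/-- The incoherence (largest leverage score) of a subspace of `ℝ^n`. -/
def incoherence {n : ℕ} (E : Submodule ℝ (EuclideanSpace ℝ (Fin n))) : ℝ :=
  ⨆ j : Fin n,
    ‖(E.orthogonalProjectionOnto (EuclideanSpace.single j 1) : EuclideanSpace ℝ (Fin n))‖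


/-- The column space of a matrix, as a subspace of Euclidean space. -/
def colSpace {n d : ℕ} (A : Matrix (Fin n) (Fin d) ℝ) :
    Submodule ℝ (EuclideanSpace ℝ (Fin n)) :=
  Submodule.span ℝ (Set.range fun k : Fin d => (WithLp.toLp 2 (fun i => A i k) : EuclideanSpace ℝ (Fin n)))

/-- The largest leverage score `μ(A)` of a matrix. -/
def colIncoherence {n d : ℕ} (A : Matrix (Fin n) (Fin d) ℝ) : ℝ :=
  incoherence (colSpace A)

/-- The `ℓ₂ → ℓ₂` operator norm of a matrix. -/
def opNorm {m n : ℕ} (A : Matrix (Fin m) (Fin n) ℝ) : ℝ :=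
  ⨆ x : {x : Fin n → ℝ // sqSum x = 1}, l2 (A.mulVec x.1)
lemma sqSum_nonneg {ι : Type*} [Fintype ι] (v : ι → ℝ) : 0 ≤ sqSum v :=
  Finset.sum_nonneg fun _ _ => sq_nonneg _

lemma sqSum_pos_of_ne {ι : Type*} [Fintype ι] {v : ι → ℝ} (h : v ≠ 0) : 0 < sqSum v := by
  rcases Function.ne_iff.mp h with ⟨i, hi⟩
  have hi' : v i ≠ 0 := by simpa using hi
  have h1 : 0 < v i ^ 2 := by positivity
  exact lt_of_lt_of_le h1
    (Finset.single_le_sum (fun j _ => sq_nonneg (v j)) (Finset.mem_univ i))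

lemma sqSum_add {ι : Type*} [Fintype ι] (x y : ι → ℝ) :
    sqSum (x + y) = sqSum x + 2 * (∑ i, x i * y i) + sqSum y := by
  unfold sqSum
  rw [Finset.mul_sum, ← Finset.sum_add_distrib, ← Finset.sum_add_distrib]
  exact Finset.sum_congr rfl fun i _ => by simp only [Pi.add_apply]; ring

lemma sqSum_smul {ι : Type*} [Fintype ι] (a : ℝ) (x : ι → ℝ) :
    sqSum (a • x) = a ^ 2 * sqSum x := by
  unfold sqSum
  rw [Finset.mul_sum]
  exact Finset.sum_congr rfl fun i _ => by
    simp only [Pi.smul_apply, smul_eq_mul]; ring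

lemma abs_inn_le {ι : Type*} [Fintype ι] (x y : ι → ℝ) :
    |∑ i, x i * y i| ≤ Real.sqrt (sqSum x) * Real.sqrt (sqSum y) := by
  have h := Finset.sum_mul_sq_le_sq_mul_sq Finset.univ x y
  have h2 : |∑ i, x i * y i| = Real.sqrt ((∑ i, x i * y i) ^ 2) :=
    (Real.sqrt_sq_eq_abs _).symm
  rw [h2, ← Real.sqrt_mul (sqSum_nonneg x)]
  exact Real.sqrt_le_sqrt (by simpa [sqSum] using h)

lemma inn_le {ι : Type*} [Fintype ι] (x y : ι → ℝ) :
    ∑ i, x i * y i ≤ Real.sqrt (sqSum x) * Real.sqrt (sqSum y) :=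
  (le_abs_self _).trans (abs_inn_le x y)

/-- First-order optimality condition for a least squares minimizer over a convex set. -/
lemma foc {n d : ℕ} (M : Matrix (Fin n) (Fin d) ℝ) (c : Fin n → ℝ)
    {C : Set (Fin d → ℝ)} (hConv : Convex ℝ C) {x₀ x₁ : Fin d → ℝ}
    (h₀ : x₀ ∈ C) (h₁ : x₁ ∈ C)
    (hmin : ∀ x ∈ C, sqSum (M.mulVec x₀ - c) ≤ sqSum (M.mulVec x - c)) :
    0 ≤ ∑ i, (M.mulVec x₀ - c) i * (M.mulVec x₁ - M.mulVec x₀) i := by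
  set r := M.mulVec x₀ - c with hr
  set w := M.mulVec x₁ - M.mulVec x₀ with hw
  by_contra hI
  push_neg at hI
  set I := ∑ i, r i * w i with hIdef
  have hS : 0 ≤ sqSum w := sqSum_nonneg w
  set S := sqSum w with hSdef
  have key : ∀ t : ℝ, 0 < t → t ≤ 1 → 0 ≤ 2 * (t * I) + t ^ 2 * S := by
    intro t ht0 ht1
    have hmem : x₀ + t • (x₁ - x₀) ∈ C := by
      have h := hConv h₀ h₁ (by linarith : (0:ℝ) ≤ 1 - t) (le_of_lt ht0) (by ring)
      convert h using 1
      module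
    have hv : M.mulVec (x₀ + t • (x₁ - x₀)) - c = r + t • w := by
      rw [Matrix.mulVec_add, Matrix.mulVec_smul, Matrix.mulVec_sub, hr, hw]
      module
    have hm := hmin _ hmem
    rw [hv, sqSum_add] at hm
    have hsm : sqSum (t • w) = t ^ 2 * S := sqSum_smul t w
    have hin : (∑ i, r i * (t • w) i) = t * I := by
      rw [hIdef, Finset.mul_sum]
      exact Finset.sum_congr rfl fun i _ => by
        simp only [Pi.smul_apply, smul_eq_mul]; ring
    rw [hsm, hin] at hm
    linarith
  rcases eq_or_lt_of_le hS with hS0 | hSpos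
  · have h := key 1 one_pos le_rfl
    rw [← hS0] at h
    nlinarith
  · have hIS : 0 < -I / S := div_pos (by linarith) hSpos
    set t := min 1 (-I / S) with htdef
    have ht0 : 0 < t := lt_min one_pos hIS
    have ht1 : t ≤ 1 := min_le_left _ _
    have h2 := key t ht0 ht1
    have hts : t * S ≤ -I := by
      have hmin2 : t ≤ -I / S := min_le_right _ _
      calc t * S ≤ (-I / S) * S := by nlinarith
        _ = -I := by field_simp
    nlinarith [mul_le_mul_of_nonneg_left hts ht0.le, mul_pos ht0 (neg_pos.mpr hI)]

lemma sum_mulVec_comm {m n : ℕ} (Φ : Matrix (Fin m) (Fin n) ℝ)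
    (x : Fin m → ℝ) (v : Fin n → ℝ) :
    ∑ i, x i * Φ.mulVec v i = ∑ j, Φ.transpose.mulVec x j * v j := by
  simp only [Matrix.mulVec, dotProduct, Matrix.transpose_apply,
    Finset.mul_sum, Finset.sum_mul]
  rw [Finset.sum_comm]
  exact Finset.sum_congr rfl fun j _ => Finset.sum_congr rfl fun i _ => by ring

set_option maxHeartbeats 2000000 in
/-- Comparison between the optimal values of a constrained least squares program
and its sketched version, in terms of `Z₁` and `Z₂`. -/
theorem sketched_least_squares_compare
    {n d m : ℕ} (A : Matrix (Fin n) (Fin d) ℝ) (b : Fin n → ℝ)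
    (C : Set (Fin d → ℝ)) (hCcl : IsClosed C) (hCconv : Convex ℝ C)
    (Φ : Matrix (Fin m) (Fin n) ℝ) (xs xh : Fin d → ℝ)
    (hxsC : xs ∈ C)
    (hxs : ∀ x ∈ C, sqSum (A.mulVec xs - b) ≤ sqSum (A.mulVec x - b))
    (hxhC : xh ∈ C)
    (hxh : ∀ x ∈ C,
      sqSum (Φ.mulVec (A.mulVec xh) - Φ.mulVec b) ≤
        sqSum (Φ.mulVec (A.mulVec x) - Φ.mulVec b))
    (hne : A.mulVec xs ≠ b)
    (u : Fin n → ℝ) (hu : u = (l2 (A.mulVec xs - b))⁻¹ • (A.mulVec xs - b))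
    (Z₁ Z₂ : ℝ)
    (hZ₁ : Z₁ = Z1 A Φ (tangentCone C xs))
    (hZ₂ : Z₂ = Z2 A Φ (tangentCone C xs) u)
    (hZ₁pos : 0 < Z₁) :
    sqSum (A.mulVec xh - b) ≤ (1 + Z₂ / Z₁) ^ 2 * sqSum (A.mulVec xs - b) ∧
    ((∀ x : Fin d → ℝ, sqSum (A.mulVec xs - b) ≤ sqSum (A.mulVec x - b)) →
      sqSum (A.mulVec xh - b) ≤
        (1 + Z₂ ^ 2 / Z₁ ^ 2) * sqSum (A.mulVec xs - b)) := by
  set r : Fin n → ℝ := A.mulVec xs - b with hrdef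
  set e : Fin n → ℝ := A.mulVec xh - A.mulVec xs with hedef
  have hre : A.mulVec xh - b = r + e := by rw [hrdef, hedef]; module
  have hrne : r ≠ 0 := sub_ne_zero.mpr hne
  have hsqr : 0 < sqSum r := sqSum_pos_of_ne hrne
  set R : ℝ := Real.sqrt (sqSum r) with hRdef
  have hR0 : 0 < R := Real.sqrt_pos.mpr hsqr
  have hRsq : R ^ 2 = sqSum r := Real.sq_sqrt hsqr.le
  have hl2 : l2 r = R := by rw [hRdef]; rfl
  have hur : u = R⁻¹ • r := by rw [hu, hl2]
  -- first-order optimality of xs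
  have hc0 : 0 ≤ ∑ i, r i * e i := by
    have h := foc A b hCconv hxsC hxhC hxs
    rw [hrdef, hedef]
    exact h
  -- first-order optimality of xh for the sketched problem
  have hxh' : ∀ x ∈ C,
      sqSum ((Φ * A).mulVec xh - Φ.mulVec b) ≤ sqSum ((Φ * A).mulVec x - Φ.mulVec b) := by
    intro x hx
    simpa only [← Matrix.mulVec_mulVec] using hxh x hx
  have hfoc2 := foc (Φ * A) (Φ.mulVec b) hCconv hxhC hxsC hxh'
  have expand : ∀ i : Fin m,
      ((Φ * A).mulVec xh - Φ.mulVec b) i * ((Φ * A).mulVec xs - (Φ * A).mulVec xh) i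
        = -(Φ.mulVec r i * Φ.mulVec e i) - Φ.mulVec e i ^ 2 := by
    intro i
    have h1 : (Φ * A).mulVec xh - Φ.mulVec b = Φ.mulVec r + Φ.mulVec e := by
      rw [← Matrix.mulVec_mulVec, ← Matrix.mulVec_sub, hre, Matrix.mulVec_add]
    have h2 : (Φ * A).mulVec xs - (Φ * A).mulVec xh = -(Φ.mulVec e) := by
      rw [← Matrix.mulVec_mulVec, ← Matrix.mulVec_mulVec, ← Matrix.mulVec_sub,
        ← Matrix.mulVec_neg]
      congr 1
      rw [hedef, neg_sub]
    rw [h1, h2]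
    simp only [Pi.add_apply, Pi.neg_apply]
    ring
  have hkey : sqSum (Φ.mulVec e) ≤ -(∑ i, Φ.mulVec r i * Φ.mulVec e i) := by
    have hsum : (∑ i, ((Φ * A).mulVec xh - Φ.mulVec b) i *
        ((Φ * A).mulVec xs - (Φ * A).mulVec xh) i)
        = -(∑ i, Φ.mulVec r i * Φ.mulVec e i) - sqSum (Φ.mulVec e) := by
      rw [sqSum, ← Finset.sum_neg_distrib, ← Finset.sum_sub_distrib]
      exact Finset.sum_congr rfl fun i _ => expand i
    rw [hsum] at hfoc2
    linarith
  have hZ2nonneg : 0 ≤ Z₂ := by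
    rw [hZ₂, Z2]
    exact Real.iSup_nonneg fun v => abs_nonneg _
  by_cases he : e = 0
  · -- degenerate case : the minimizers have the same residual
    have hxh_eq : A.mulVec xh - b = r := by rw [hre, he, add_zero]
    rw [hxh_eq]
    constructor
    · have h1 : (1:ℝ) ≤ (1 + Z₂ / Z₁) ^ 2 := by
        nlinarith [div_nonneg hZ2nonneg hZ₁pos.le]
      exact le_mul_of_one_le_left (sqSum_nonneg r) h1
    · intro _
      have h1 : (1:ℝ) ≤ 1 + Z₂ ^ 2 / Z₁ ^ 2 := by
        have : 0 ≤ Z₂ ^ 2 / Z₁ ^ 2 := by positivity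
        linarith
      exact le_mul_of_one_le_left (sqSum_nonneg r) h1
  · have hsqe : 0 < sqSum e := sqSum_pos_of_ne he
    set t : ℝ := Real.sqrt (sqSum e) with htdef
    have ht0 : 0 < t := Real.sqrt_pos.mpr hsqe
    have htsq : t ^ 2 = sqSum e := Real.sq_sqrt hsqe.le
    set v₀ : Fin n → ℝ := t⁻¹ • e with hv₀
    have hev : e = t • v₀ := by
      rw [hv₀, smul_smul, mul_inv_cancel₀ (ne_of_gt ht0), one_smul]
    have hsqv : sqSum v₀ = 1 := by
      rw [hv₀, sqSum_smul, ← htsq]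
      field_simp
    have hmemv : (∃ y ∈ tangentCone C xs, A.mulVec y = v₀) ∧ ∑ i, v₀ i ^ 2 = 1 := by
      refine ⟨⟨t⁻¹ • (xh - xs), ?_, ?_⟩, hsqv⟩
      · exact subset_closure ⟨t⁻¹, by positivity, xh, hxhC, rfl⟩
      · rw [Matrix.mulVec_smul, Matrix.mulVec_sub, hv₀, hedef]
    set i₀ : {v : Fin n → ℝ // (∃ y ∈ tangentCone C xs, A.mulVec y = v) ∧
        ∑ i, v i ^ 2 = 1} := ⟨v₀, hmemv⟩ with hi₀
    have hZ1le : Z₁ ≤ sqSum (Φ.mulVec v₀) := by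
      rw [hZ₁, Z1]
      exact ciInf_le ⟨0, by
        rintro x ⟨v, rfl⟩
        exact Finset.sum_nonneg fun i _ => sq_nonneg _⟩ i₀
    have hbdd : BddAbove (Set.range fun v : {v : Fin n → ℝ //
        (∃ y ∈ tangentCone C xs, A.mulVec y = v) ∧ ∑ i, v i ^ 2 = 1} =>
        |(∑ i, Φ.mulVec u i * Φ.mulVec v.1 i) - ∑ i, u i * v.1 i|) := by
      refine ⟨Real.sqrt (sqSum (Φ.transpose.mulVec (Φ.mulVec u))) + Real.sqrt (sqSum u), ?_⟩
      rintro x ⟨v, rfl⟩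
      have hv1 : Real.sqrt (sqSum v.1) = 1 := by
        have h : sqSum v.1 = 1 := v.2.2
        rw [h, Real.sqrt_one]
      have h1 : |∑ i, Φ.mulVec u i * Φ.mulVec v.1 i|
          ≤ Real.sqrt (sqSum (Φ.transpose.mulVec (Φ.mulVec u))) := by
        rw [sum_mulVec_comm]
        have h := abs_inn_le (Φ.transpose.mulVec (Φ.mulVec u)) v.1
        rwa [hv1, mul_one] at h
      have h2 : |∑ i, u i * v.1 i| ≤ Real.sqrt (sqSum u) := by
        have h := abs_inn_le u v.1
        rwa [hv1, mul_one] at h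
      calc |(∑ i, Φ.mulVec u i * Φ.mulVec v.1 i) - ∑ i, u i * v.1 i|
          ≤ |∑ i, Φ.mulVec u i * Φ.mulVec v.1 i| + |∑ i, u i * v.1 i| := abs_sub _ _
        _ ≤ _ := by linarith
    have hZ2ge : |(∑ i, Φ.mulVec u i * Φ.mulVec v₀ i) - ∑ i, u i * v₀ i| ≤ Z₂ := by
      rw [hZ₂, Z2]
      exact le_ciSup hbdd i₀
    set P : ℝ := ∑ i, Φ.mulVec u i * Φ.mulVec v₀ i with hPdef
    set q : ℝ := ∑ i, u i * v₀ i with hqdef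
    have hqc : q = R⁻¹ * t⁻¹ * (∑ i, r i * e i) := by
      rw [hqdef, Finset.mul_sum]
      refine Finset.sum_congr rfl fun i _ => ?_
      rw [hur, hv₀]
      simp only [Pi.smul_apply, smul_eq_mul]
      ring
    have hru : r = R • u := by
      rw [hur, smul_smul, mul_inv_cancel₀ (ne_of_gt hR0), one_smul]
    have hF1 : t ^ 2 * sqSum (Φ.mulVec v₀) ≤ -(R * t * P) := by
      have h1 : sqSum (Φ.mulVec e) = t ^ 2 * sqSum (Φ.mulVec v₀) := by
        rw [hev, Matrix.mulVec_smul, sqSum_smul]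
      have h2 : (∑ i, Φ.mulVec r i * Φ.mulVec e i) = R * t * P := by
        rw [hPdef, hru, hev, Matrix.mulVec_smul, Matrix.mulVec_smul,
          Finset.mul_sum]
        refine Finset.sum_congr rfl fun i _ => ?_
        simp only [Pi.smul_apply, smul_eq_mul]
        ring
      rw [h1, h2] at hkey
      exact hkey
    have hd := abs_le.mp hZ2ge
    have hRtq : R * t * q = ∑ i, r i * e i := by
      rw [hqc]
      field_simp
    have ht2Z : t ^ 2 * Z₁ ≤ R * t * Z₂ := by
      have h1 : t ^ 2 * Z₁ ≤ t ^ 2 * sqSum (Φ.mulVec v₀) :=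
        mul_le_mul_of_nonneg_left hZ1le (sq_nonneg t)
      have hprod : 0 ≤ R * t * (P - q + Z₂) :=
        mul_nonneg (mul_pos hR0 ht0).le (by linarith [hd.1])
      nlinarith [h1, hF1, hRtq, hc0, hprod]
    have htZ : t * Z₁ ≤ R * Z₂ := by
      by_contra hcon
      push_neg at hcon
      nlinarith [ht2Z, mul_lt_mul_of_pos_left hcon ht0]
    constructor
    · -- first bound
      rw [hre, sqSum_add]
      have hce : (∑ i, r i * e i) ≤ R * t := by
        have h := inn_le r e
        rwa [← hRdef, ← htdef] at h
      have h2 : t ≤ R * Z₂ / Z₁ := (le_div_iff₀ hZ₁pos).mpr htZ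
      have h1 : R + t ≤ R * (1 + Z₂ / Z₁) := by
        have h3 : R * (1 + Z₂ / Z₁) = R + R * Z₂ / Z₁ := by ring
        linarith
      have h3 : (R + t) ^ 2 ≤ (R * (1 + Z₂ / Z₁)) ^ 2 :=
        pow_le_pow_left₀ (by positivity) h1 2
      have hgoal : (R * (1 + Z₂ / Z₁)) ^ 2 = (1 + Z₂ / Z₁) ^ 2 * sqSum r := by
        rw [← hRsq]; ring
      nlinarith [hce, htsq, hRsq, h3, hgoal]
    · -- second bound, under global optimality
      intro hglob
      have hfoc3 := foc A b convex_univ (Set.mem_univ xs) (Set.mem_univ (xs - (xh - xs)))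
        (fun x _ => hglob x)
      have hA : A.mulVec (xs - (xh - xs)) - A.mulVec xs = -e := by
        rw [Matrix.mulVec_sub, Matrix.mulVec_sub, hedef]
        abel
      rw [← hrdef, hA] at hfoc3
      have hCe : 0 ≤ -(∑ i, r i * e i) := by
        calc (0:ℝ) ≤ ∑ i, r i * (-e) i := hfoc3
          _ = -(∑ i, r i * e i) := by
            rw [← Finset.sum_neg_distrib]
            exact Finset.sum_congr rfl fun i _ => by
              simp only [Pi.neg_apply]; ring
      have hc00 : (∑ i, r i * e i) = 0 := le_antisymm (by linarith) hc0
      rw [hre, sqSum_add, hc00]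
      have h2 : t ≤ R * Z₂ / Z₁ := (le_div_iff₀ hZ₁pos).mpr htZ
      have h3 : t ^ 2 ≤ (R * Z₂ / Z₁) ^ 2 := pow_le_pow_left₀ ht0.le h2 2
      have h4 : (R * Z₂ / Z₁) ^ 2 = R ^ 2 * (Z₂ ^ 2 / Z₁ ^ 2) := by
        rw [div_pow, mul_pow]
        ring
      have h5 : (1 + Z₂ ^ 2 / Z₁ ^ 2) * sqSum r = sqSum r + R ^ 2 * (Z₂ ^ 2 / Z₁ ^ 2) := by
        rw [← hRsq]; ring
      nlinarith [htsq, h3, h4, h5]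

end SDR
end
end

section
/- There is a universal constant c > 0 with the following property. Let Φ be an SJLT with m rows, n columns and column sparsity s. Fix x ∈ ℝ^n such that |x_j| ≥ 1 for all j in a set J ⊂ {1,…,n} with |J| = r, and set r₁ = min{sr/3, cm}. Then with probability at least 1 − 2^{−sr} (over Φ) one has |{ i ∈ {1,…,m} : Σ_{j=1}^n Φ_{ij}² x_j² ≥ 1/s }| > r₁. -/
open MeasureTheory ProbabilityTheory
open scoped ENNReal NNReal

noncomputable section

namespace SDR

section AuxLemmas

private lemma pow_self_le_exp_mul_factorial (k : ℕ) :
    (k : ℝ) ^ k ≤ Real.exp 1 ^ k * k.factorial := by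
  induction k with
  | zero => simp
  | succ k ih =>
    have hek : (1:ℝ) ≤ Real.exp 1 := Real.one_le_exp (by norm_num)
    have h1 : ((k:ℝ)+1) ^ k ≤ Real.exp 1 * (k:ℝ) ^ k := by
      rcases Nat.eq_zero_or_pos k with hk | hk
      · subst hk; simpa using hek
      · have hkp : (0:ℝ) < k := by exact_mod_cast hk
        have h2 : (k:ℝ) + 1 ≤ Real.exp (1/k) * k := by
          have h2' := mul_le_mul_of_nonneg_right (Real.add_one_le_exp (1/(k:ℝ))) hkp.le
          have h2'' : (1/(k:ℝ) + 1) * k = k + 1 := by field_simp; ring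
          linarith
        calc ((k:ℝ)+1)^k ≤ (Real.exp (1/k) * k)^k := by
              apply pow_le_pow_left₀ (by positivity) h2
        _ = Real.exp (1/k) ^ k * (k:ℝ)^k := mul_pow _ _ _
        _ = Real.exp 1 * (k:ℝ)^k := by
              rw [← Real.exp_nat_mul]
              congr 2
              field_simp
    have hfk : (0:ℝ) ≤ (k.factorial : ℝ) := by positivity
    calc ((k+1:ℕ):ℝ) ^ (k+1) = ((k:ℝ)+1)^k * ((k:ℝ)+1) := by push_cast; ring
    _ ≤ (Real.exp 1 * (k:ℝ)^k) * ((k:ℝ)+1) := by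
          apply mul_le_mul_of_nonneg_right h1 (by positivity)
    _ ≤ (Real.exp 1 * (Real.exp 1 ^ k * k.factorial)) * ((k:ℝ)+1) := by
          have := mul_le_mul_of_nonneg_left ih (Real.exp_pos 1).le
          apply mul_le_mul_of_nonneg_right this (by positivity)
    _ = Real.exp 1 ^ (k+1) * (k+1).factorial := by
          push_cast [Nat.factorial_succ]; ring

private lemma choose_mul_pow_le' (n k : ℕ) :
    (n.choose k : ℝ) * (k:ℝ) ^ k ≤ Real.exp 1 ^ k * (n:ℝ) ^ k := by
  have h1 : (n.choose k : ℝ) ≤ (n:ℝ)^k / k.factorial := Nat.choose_le_pow_div k n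
  have h2 := pow_self_le_exp_mul_factorial k
  have hf : (0:ℝ) < k.factorial := by exact_mod_cast k.factorial_pos
  calc (n.choose k : ℝ) * (k:ℝ)^k ≤ ((n:ℝ)^k / k.factorial) * (Real.exp 1 ^ k * k.factorial) := by
        apply mul_le_mul h1 h2 (by positivity) (by positivity)
  _ = Real.exp 1 ^ k * (n:ℝ) ^ k := by field_simp

private lemma main_arith (s r t m : ℕ) (hs : 1 ≤ s) (hst : s ≤ t)
    (h3 : 3*t ≤ s*r) (h100 : 100*t ≤ m) :
    (m.choose t : ℝ) * ((t.choose s : ℝ) * ((s:ℝ)/m)^s)^r ≤ ((2:ℝ)^(s*r))⁻¹ := by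
  obtain ⟨k, hk⟩ : ∃ k, k = s*r := ⟨_, rfl⟩
  rw [← hk]
  rw [← hk] at h3
  have ht1 : 1 ≤ t := hs.trans hst
  have htk : t ≤ k := le_trans (by omega) h3
  have hm1 : (1:ℕ) ≤ m := by omega
  have htR : (0:ℝ) < t := by exact_mod_cast ht1
  have hmR : (0:ℝ) < m := by exact_mod_cast hm1
  have he1 : (1:ℝ) ≤ Real.exp 1 := Real.one_le_exp (by norm_num)
  have he4 : Real.exp 1 ^ 4 ≤ (1250:ℝ) := by
    calc Real.exp 1 ^ 4 ≤ (2.7182818286:ℝ) ^ 4 :=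
          pow_le_pow_left₀ (Real.exp_pos 1).le Real.exp_one_lt_d9.le 4
      _ ≤ 1250 := by norm_num
  have hgoal : (2:ℝ)^k * ((m.choose t : ℝ) * ((t.choose s : ℝ))^r * (s:ℝ)^k) ≤ (m:ℝ)^k := by
    apply le_of_pow_le_pow_left₀ (n := 3) (by norm_num) (by positivity)
    have key1 : ((m.choose t : ℝ))^3 * (t:ℝ)^(3*t) ≤ Real.exp 1 ^ (3*t) * (m:ℝ)^(3*t) := by
      have h := pow_le_pow_left₀ (by positivity) (choose_mul_pow_le' m t) 3
      calc ((m.choose t : ℝ))^3 * (t:ℝ)^(3*t)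
          = ((m.choose t : ℝ) * (t:ℝ)^t)^3 := by ring
        _ ≤ (Real.exp 1 ^ t * (m:ℝ)^t)^3 := h
        _ = Real.exp 1 ^ (3*t) * (m:ℝ)^(3*t) := by ring
    have key2 : ((t.choose s : ℝ))^(3*r) * (s:ℝ)^(3*k) ≤ Real.exp 1 ^ (3*k) * (t:ℝ)^(3*k) := by
      have h := pow_le_pow_left₀ (by positivity) (choose_mul_pow_le' t s) (3*r)
      calc ((t.choose s : ℝ))^(3*r) * (s:ℝ)^(3*k)
          = ((t.choose s : ℝ) * (s:ℝ)^s)^(3*r) := by rw [hk]; ring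
        _ ≤ (Real.exp 1 ^ s * (t:ℝ)^s)^(3*r) := h
        _ = Real.exp 1 ^ (3*k) * (t:ℝ)^(3*k) := by rw [hk]; ring
    have hmain : ((2:ℝ)^k * ((m.choose t : ℝ) * ((t.choose s : ℝ))^r * (s:ℝ)^k))^3 * (t:ℝ)^(3*t)
        ≤ ((m:ℝ)^k)^3 * (t:ℝ)^(3*t) := by
      have expand : ((2:ℝ)^k * ((m.choose t : ℝ) * ((t.choose s : ℝ))^r * (s:ℝ)^k))^3 * (t:ℝ)^(3*t)
          = (2:ℝ)^(3*k) * (((m.choose t : ℝ))^3 * (t:ℝ)^(3*t)) *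
            (((t.choose s : ℝ))^(3*r) * (s:ℝ)^(3*k)) := by ring
      rw [expand]
      calc (2:ℝ)^(3*k) * (((m.choose t : ℝ))^3 * (t:ℝ)^(3*t)) *
            (((t.choose s : ℝ))^(3*r) * (s:ℝ)^(3*k))
          ≤ (2:ℝ)^(3*k) * (Real.exp 1 ^ (3*t) * (m:ℝ)^(3*t)) *
            (Real.exp 1 ^ (3*k) * (t:ℝ)^(3*k)) := by
            apply mul_le_mul (mul_le_mul le_rfl key1 (by positivity) (by positivity)) key2
              (by positivity) (by positivity)
        _ = (m:ℝ)^(3*t) * ((2:ℝ)^(3*k) * Real.exp 1 ^ (3*t+3*k) * (t:ℝ)^(3*(k-t)))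
              * (t:ℝ)^(3*t) := by
            rw [pow_add]
            have h3k : 3*k = 3*(k-t) + 3*t := by omega
            rw [h3k, pow_add ((t:ℝ))]
            ring
        _ ≤ (m:ℝ)^(3*t) * ((m:ℝ)^(3*(k-t))) * (t:ℝ)^(3*t) := by
            apply mul_le_mul_of_nonneg_right _ (by positivity)
            apply mul_le_mul_of_nonneg_left _ (by positivity)
            calc (2:ℝ)^(3*k) * Real.exp 1 ^ (3*t+3*k) * (t:ℝ)^(3*(k-t))
                ≤ (2:ℝ)^(3*k) * Real.exp 1 ^ (4*k) * (t:ℝ)^(3*(k-t)) := by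
                  apply mul_le_mul_of_nonneg_right _ (by positivity)
                  exact mul_le_mul_of_nonneg_left
                    (pow_le_pow_right₀ he1 (by omega)) (by positivity)
              _ = ((2:ℝ)^3 * Real.exp 1 ^ 4)^k * (t:ℝ)^(3*(k-t)) := by
                  rw [mul_pow, ← pow_mul, ← pow_mul]
              _ ≤ (10000:ℝ)^k * (t:ℝ)^(3*(k-t)) := by
                  apply mul_le_mul_of_nonneg_right _ (by positivity)
                  apply pow_le_pow_left₀ (by positivity) (by nlinarith)
              _ ≤ (100:ℝ)^(3*(k-t)) * (t:ℝ)^(3*(k-t)) := by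
                  apply mul_le_mul_of_nonneg_right _ (by positivity)
                  calc (10000:ℝ)^k = (100:ℝ)^(2*k) := by
                        rw [pow_mul]; norm_num
                    _ ≤ (100:ℝ)^(3*(k-t)) := pow_le_pow_right₀ (by norm_num) (by omega)
              _ = ((100:ℝ)*t)^(3*(k-t)) := by rw [mul_pow]
              _ ≤ (m:ℝ)^(3*(k-t)) := by
                  apply pow_le_pow_left₀ (by positivity)
                  exact_mod_cast h100
        _ = ((m:ℝ)^k)^3 * (t:ℝ)^(3*t) := by
            rw [← pow_add, ← pow_mul]
            congr 2
            omega
    exact le_of_mul_le_mul_right hmain (by positivity)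
  have h2k : (0:ℝ) < (2:ℝ)^k := by positivity
  have hmk : (0:ℝ) < (m:ℝ)^k := by positivity
  have hLHS : (m.choose t : ℝ) * ((t.choose s : ℝ) * ((s:ℝ)/m)^s)^r
      = (m.choose t : ℝ) * ((t.choose s : ℝ))^r * (s:ℝ)^k / (m:ℝ)^k := by
    rw [hk, mul_pow, ← pow_mul, div_pow]
    ring
  rw [hLHS, div_le_iff₀ hmk, inv_mul_eq_div, le_div_iff₀ h2k]
  calc (m.choose t : ℝ) * ((t.choose s : ℝ))^r * (s:ℝ)^k * (2:ℝ)^k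
      = (2:ℝ)^k * ((m.choose t : ℝ) * ((t.choose s : ℝ))^r * (s:ℝ)^k) := by ring
    _ ≤ (m:ℝ)^k := hgoal

end AuxLemmas

/-- With high probability, many rows of an SJLT pick up mass from a spread vector. -/
theorem many_heavy_rows :
    ∃ c : ℝ, 0 < c ∧
      ∀ (n m s r : ℕ) (Ω : Type) [MeasurableSpace Ω] (μ : Measure Ω),
        IsProbabilityMeasure μ →
      ∀ (σ δ : Ω → Fin m → Fin n → ℝ) (Φ : Ω → Matrix (Fin m) (Fin n) ℝ),
        IsSJLT μ m n s σ δ Φ →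
      ∀ (x : Fin n → ℝ) (J : Finset (Fin n)), J.card = r →
        (∀ j ∈ J, 1 ≤ |x j|) →
        1 - ENNReal.ofReal (((2 : ℝ) ^ (s * r))⁻¹) ≤
          μ {ω | min ((s * r : ℝ) / 3) (c * m) <
              (({i : Fin m | (1 : ℝ) / s ≤ ∑ j, (Φ ω i j) ^ 2 * x j ^ 2}).ncard : ℝ)} := by
  classical
  refine ⟨1/100, by norm_num, ?_⟩
  intro n m s r Ω _ μ hμ σ δ Φ hSJLT x J hJcard hx
  obtain ⟨hσfull, hδfull, hindepσδ, hΦ⟩ := hSJLT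
  obtain ⟨hδmeas, hδ01, hδsum, hneg, hδindep⟩ := hδfull
  obtain ⟨hσmeas, hσval, hσindep⟩ := hσfull
  rcases Nat.eq_zero_or_pos (s * r) with hsr | hsr
  · rw [hsr]
    simp
  have hs : 1 ≤ s := by
    rcases Nat.eq_zero_or_pos s with h | h
    · simp [h] at hsr
    · exact h
  have hr : 1 ≤ r := by
    rcases Nat.eq_zero_or_pos r with h | h
    · simp [h] at hsr
    · exact h
  have hsR : (0:ℝ) < s := by exact_mod_cast hs
  -- the good event for the signs
  set G : Set Ω := {ω | ∀ i j, σ ω i j = 1 ∨ σ ω i j = -1} with hGdef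
  have hGc : μ Gᶜ = 0 := by
    have hsub : Gᶜ ⊆ ⋃ i, ⋃ j, ({ω | σ ω i j = 1} ∪ {ω | σ ω i j = -1})ᶜ := by
      intro ω hω
      simp only [hGdef, Set.mem_compl_iff, Set.mem_setOf_eq, not_forall] at hω
      obtain ⟨i, j, hij⟩ := hω
      refine Set.mem_iUnion.2 ⟨i, Set.mem_iUnion.2 ⟨j, ?_⟩⟩
      simp only [Set.mem_compl_iff, Set.mem_union, Set.mem_setOf_eq]
      tauto
    refine measure_mono_null hsub ?_
    refine measure_iUnion_null fun i => measure_iUnion_null fun j => ?_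
    have hm1 : MeasurableSet {ω | σ ω i j = 1} := by
      exact (hσmeas i j) (measurableSet_singleton 1)
    have hm2 : MeasurableSet {ω | σ ω i j = -1} := by
      exact (hσmeas i j) (measurableSet_singleton (-1))
    have hdisj : Disjoint {ω | σ ω i j = 1} {ω | σ ω i j = -1} := by
      rw [Set.disjoint_left]
      intro ω h1 h2
      simp only [Set.mem_setOf_eq] at h1 h2
      rw [h1] at h2
      norm_num at h2
    have hone : μ ({ω | σ ω i j = 1} ∪ {ω | σ ω i j = -1}) = 1 := by
      rw [measure_union hdisj hm2, (hσval i j).1, (hσval i j).2]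
      exact ENNReal.add_halves 1
    rw [measure_compl (hm1.union hm2) (measure_ne_top μ _), hone, measure_univ, tsub_self]
  -- heavy rows contain rows hit by some column of J
  have hheavy : ∀ ω ∈ G, ∀ i : Fin m, (∃ j ∈ J, δ ω i j = 1) →
      (1:ℝ)/s ≤ ∑ j, (Φ ω i j)^2 * x j ^ 2 := by
    intro ω hω i hex
    obtain ⟨j₀, hj₀J, hj₀⟩ := hex
    have hΦ2 : (Φ ω i j₀)^2 = 1/s := by
      rw [hΦ ω i j₀, hj₀, mul_one, div_pow, Real.sq_sqrt hsR.le]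
      have hσ2 : σ ω i j₀ ^ 2 = 1 := by
        rcases hω i j₀ with h | h <;> rw [h] <;> norm_num
      rw [hσ2]
    have hx2 : 1 ≤ x j₀ ^ 2 := by
      have h := hx j₀ hj₀J
      nlinarith [sq_abs (x j₀)]
    have hterm : (1:ℝ)/s ≤ (Φ ω i j₀)^2 * x j₀ ^ 2 := by
      rw [hΦ2]
      nlinarith [one_div_pos.2 hsR]
    calc (1:ℝ)/s ≤ (Φ ω i j₀)^2 * x j₀ ^ 2 := hterm
      _ ≤ ∑ j, (Φ ω i j)^2 * x j ^ 2 :=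
          Finset.single_le_sum (f := fun j => (Φ ω i j)^2 * x j ^ 2)
            (fun j _ => by positivity) (Finset.mem_univ j₀)
  -- support of each column has exactly s elements
  have hsupp : ∀ ω (j : Fin n), (Finset.univ.filter (fun i => δ ω i j = 1)).card = s := by
    intro ω j
    have h := hδsum ω j
    have heq : ∑ i, δ ω i j
        = (((Finset.univ.filter (fun i => δ ω i j = 1)).card : ℕ) : ℝ) := by
      rw [Finset.card_filter]
      push_cast
      refine Finset.sum_congr rfl fun i _ => ?_
      rcases hδ01 ω i j with h0 | h1
      · rw [h0]
        simp
      · rw [h1]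
        simp
    rw [heq] at h
    exact_mod_cast h
  -- lower bound on the number of heavy rows
  have hncard : ∀ ω ∈ G, (s:ℝ) ≤
      (({i : Fin m | (1:ℝ)/s ≤ ∑ j, (Φ ω i j)^2 * x j ^ 2}).ncard : ℝ) := by
    intro ω hω
    obtain ⟨j₀, hj₀⟩ := Finset.card_pos.1 (by omega : 0 < J.card)
    set T₀ := Finset.univ.filter (fun i => δ ω i j₀ = 1) with hT₀
    have hsub : (T₀ : Set (Fin m)) ⊆ {i : Fin m | (1:ℝ)/s ≤ ∑ j, (Φ ω i j)^2 * x j ^ 2} := by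
      intro i hi
      exact hheavy ω hω i ⟨j₀, hj₀, (Finset.mem_filter.1 hi).2⟩
    calc (s:ℝ) = ((T₀.card : ℕ) : ℝ) := by rw [hsupp ω j₀]
      _ = (((T₀ : Set (Fin m)).ncard : ℕ) : ℝ) := by rw [Set.ncard_coe_finset]
      _ ≤ _ := by exact_mod_cast Set.ncard_le_ncard hsub (Set.toFinite _)
  -- split according to whether the threshold is below s
  rcases lt_or_ge (min ((s:ℝ) * r / 3) (1/100 * m)) (s:ℝ) with hcase | hcase
  · -- threshold below s : the event holds on all of G
    have hGsub : G ⊆ {ω | min ((s:ℝ) * r / 3) (1/100 * m) <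
        (({i : Fin m | (1:ℝ)/s ≤ ∑ j, (Φ ω i j)^2 * x j ^ 2}).ncard : ℝ)} := by
      intro ω hω
      exact lt_of_lt_of_le hcase (hncard ω hω)
    have h1 : (1:ℝ≥0∞) ≤ μ G := by
      have h := measure_union_le (μ := μ) G Gᶜ
      rw [Set.union_compl_self, measure_univ, hGc, add_zero] at h
      exact h
    calc 1 - ENNReal.ofReal (((2:ℝ)^(s*r))⁻¹) ≤ 1 := tsub_le_self
      _ ≤ μ G := h1
      _ ≤ _ := measure_mono hGsub
  · -- main case
    set r₁ : ℝ := min ((s:ℝ) * r / 3) (1/100 * m) with hr₁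
    have hr₁0 : (0:ℝ) ≤ r₁ := le_min (by positivity) (by positivity)
    set t : ℕ := ⌊r₁⌋₊ with htdef
    have hst : s ≤ t := Nat.le_floor hcase
    have h3 : 3 * t ≤ s * r := by
      have h1 : (t:ℝ) ≤ (s:ℝ) * r / 3 := (Nat.floor_le hr₁0).trans (min_le_left _ _)
      have h2 : ((3 * t : ℕ) : ℝ) ≤ ((s * r : ℕ) : ℝ) := by push_cast; linarith
      exact_mod_cast h2
    have h100 : 100 * t ≤ m := by
      have h1 : (t:ℝ) ≤ 1/100 * m := (Nat.floor_le hr₁0).trans (min_le_right _ _)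
      have h2 : ((100 * t : ℕ) : ℝ) ≤ ((m : ℕ) : ℝ) := by push_cast; linarith
      exact_mod_cast h2
    have htm : t ≤ m := by omega
    -- the bad event
    set V : Finset (Fin m) → Set (Fin m → ℝ) := fun I => {v | ∀ i, i ∉ I → v i = 0} with hVdef
    have hVmeas : ∀ I, MeasurableSet (V I) := by
      intro I
      have hVeq : V I = ⋂ i, ⋂ (_ : i ∉ I), (fun v : Fin m → ℝ => v i) ⁻¹' {0} := by
        ext v
        simp [hVdef]
      rw [hVeq]
      exact MeasurableSet.iInter fun i => MeasurableSet.iInter fun _ =>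
        (measurable_pi_apply i) (measurableSet_singleton 0)
    set E : Set Ω := ⋃ I ∈ Finset.powersetCard t (Finset.univ : Finset (Fin m)),
        ⋂ j ∈ J, (fun (ω : Ω) (i : Fin m) => δ ω i j) ⁻¹' V I with hEdef
    -- probability of an all-ones pattern
    have hCS : ∀ (S : Finset (Fin m)) (j : Fin n), S.card = s →
        μ {ω | ∀ i ∈ S, δ ω i j = 1} ≤ ENNReal.ofReal (((s:ℝ)/m)^s) := by
      intro S j hScard
      have hmeasC : MeasurableSet {ω | ∀ i ∈ S, δ ω i j = 1} := by
        have heq : {ω | ∀ i ∈ S, δ ω i j = 1}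
            = ⋂ i ∈ (S : Set (Fin m)), (fun ω => δ ω i j) ⁻¹' {1} := by
          ext ω
          simp
        rw [heq]
        exact MeasurableSet.biInter (S : Set (Fin m)).to_countable
          fun i _ => (hδmeas i j) (measurableSet_singleton 1)
      have hind : (fun ω => ∏ i ∈ S, δ ω i j)
          = Set.indicator {ω | ∀ i ∈ S, δ ω i j = 1} (fun _ => (1:ℝ)) := by
        funext ω
        by_cases h : ∀ i ∈ S, δ ω i j = 1
        · rw [Set.indicator_of_mem (show ω ∈ {ω | ∀ i ∈ S, δ ω i j = 1} from h)]
          exact Finset.prod_eq_one h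
        · rw [Set.indicator_of_notMem (show ω ∉ {ω | ∀ i ∈ S, δ ω i j = 1} from h)]
          push_neg at h
          obtain ⟨i, hiS, hi1⟩ := h
          exact Finset.prod_eq_zero hiS ((hδ01 ω i j).resolve_right hi1)
      have hint := hneg j S
      rw [hScard] at hint
      have h1 : ∫ ω, (∏ i ∈ S, δ ω i j) ∂μ
          = (μ {ω | ∀ i ∈ S, δ ω i j = 1}).toReal := by
        rw [hind, integral_indicator_const (1:ℝ) hmeasC]
        simp
        rfl
      rw [h1] at hint
      calc μ {ω | ∀ i ∈ S, δ ω i j = 1}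
          = ENNReal.ofReal ((μ {ω | ∀ i ∈ S, δ ω i j = 1}).toReal) :=
            (ENNReal.ofReal_toReal (measure_ne_top μ _)).symm
        _ ≤ ENNReal.ofReal (((s:ℝ)/m)^s) := ENNReal.ofReal_le_ofReal hint
    -- per-column bound
    have hBj : ∀ (I : Finset (Fin m)), I.card = t → ∀ j, j ∈ J →
        μ ((fun (ω : Ω) (i : Fin m) => δ ω i j) ⁻¹' V I)
          ≤ (t.choose s : ℝ≥0∞) * ENNReal.ofReal (((s:ℝ)/m)^s) := by
      intro I hIcard j hjJ
      have hCsub : (fun (ω : Ω) (i : Fin m) => δ ω i j) ⁻¹' V I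
          ⊆ ⋃ S ∈ Finset.powersetCard s I, {ω | ∀ i ∈ S, δ ω i j = 1} := by
        intro ω hω
        have hωV : ∀ i, i ∉ I → δ ω i j = 0 := hω
        set T := Finset.univ.filter (fun i => δ ω i j = 1) with hTdef
        have hTI : T ⊆ I := by
          intro i hi
          by_contra hiI
          have h0 := hωV i hiI
          have h1 := (Finset.mem_filter.1 hi).2
          rw [h1] at h0
          norm_num at h0
        exact Set.mem_biUnion (Finset.mem_powersetCard.2 ⟨hTI, hsupp ω j⟩)
          (fun i hi => (Finset.mem_filter.1 hi).2)
      calc μ ((fun (ω : Ω) (i : Fin m) => δ ω i j) ⁻¹' V I)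
          ≤ ∑ S ∈ Finset.powersetCard s I, μ {ω | ∀ i ∈ S, δ ω i j = 1} :=
            (measure_mono hCsub).trans (measure_biUnion_finset_le _ _)
        _ ≤ ∑ S ∈ Finset.powersetCard s I, ENNReal.ofReal (((s:ℝ)/m)^s) :=
            Finset.sum_le_sum fun S hS => hCS S j (Finset.mem_powersetCard.1 hS).2
        _ = (t.choose s : ℝ≥0∞) * ENNReal.ofReal (((s:ℝ)/m)^s) := by
            rw [Finset.sum_const, Finset.card_powersetCard, hIcard, nsmul_eq_mul]
    -- independence across columns
    have hprodI : ∀ I : Finset (Fin m),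
        μ (⋂ j ∈ J, (fun (ω : Ω) (i : Fin m) => δ ω i j) ⁻¹' V I)
          = ∏ j ∈ J, μ ((fun (ω : Ω) (i : Fin m) => δ ω i j) ⁻¹' V I) := by
      intro I
      exact hδindep.measure_inter_preimage_eq_mul (S := J) (sets := fun _ => V I)
        (fun j _ => hVmeas I)
    -- bound on the bad event
    have hμE : μ E ≤ ENNReal.ofReal (((2:ℝ)^(s*r))⁻¹) := by
      calc μ E ≤ ∑ I ∈ Finset.powersetCard t (Finset.univ : Finset (Fin m)),
            μ (⋂ j ∈ J, (fun (ω : Ω) (i : Fin m) => δ ω i j) ⁻¹' V I) :=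
            measure_biUnion_finset_le _ _
        _ ≤ ∑ _I ∈ Finset.powersetCard t (Finset.univ : Finset (Fin m)),
              ((t.choose s : ℝ≥0∞) * ENNReal.ofReal (((s:ℝ)/m)^s))^r := by
            refine Finset.sum_le_sum fun I hI => ?_
            obtain ⟨hIsub, hIcard⟩ := Finset.mem_powersetCard.1 hI
            rw [hprodI I]
            calc ∏ j ∈ J, μ ((fun (ω : Ω) (i : Fin m) => δ ω i j) ⁻¹' V I)
                ≤ ∏ _j ∈ J, ((t.choose s : ℝ≥0∞) * ENNReal.ofReal (((s:ℝ)/m)^s)) :=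
                  Finset.prod_le_prod' (fun j hj => hBj I hIcard j hj)
              _ = ((t.choose s : ℝ≥0∞) * ENNReal.ofReal (((s:ℝ)/m)^s))^r := by
                  rw [Finset.prod_const, hJcard]
        _ = (m.choose t : ℝ≥0∞) *
              ((t.choose s : ℝ≥0∞) * ENNReal.ofReal (((s:ℝ)/m)^s))^r := by
            rw [Finset.sum_const, Finset.card_powersetCard, Finset.card_univ,
              Fintype.card_fin, nsmul_eq_mul]
        _ = ENNReal.ofReal ((m.choose t : ℝ) * ((t.choose s : ℝ) * ((s:ℝ)/m)^s)^r) := by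
            rw [ENNReal.ofReal_mul (show (0:ℝ) ≤ (m.choose t : ℝ) by positivity),
              ENNReal.ofReal_pow (show (0:ℝ) ≤ (t.choose s : ℝ) * ((s:ℝ)/m)^s by positivity),
              ENNReal.ofReal_mul (show (0:ℝ) ≤ (t.choose s : ℝ) by positivity),
              ENNReal.ofReal_natCast, ENNReal.ofReal_natCast]
        _ ≤ ENNReal.ofReal (((2:ℝ)^(s*r))⁻¹) :=
            ENNReal.ofReal_le_ofReal (main_arith s r t m hs hst h3 h100)
    -- the good events imply many heavy rows
    have hsub : G ∩ Eᶜ ⊆ {ω | min ((s:ℝ) * r / 3) (1/100 * m) <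
        (({i : Fin m | (1:ℝ)/s ≤ ∑ j, (Φ ω i j)^2 * x j ^ 2}).ncard : ℝ)} := by
      rintro ω ⟨hωG, hωE⟩
      by_contra hcon
      simp only [Set.mem_setOf_eq, not_lt] at hcon
      apply hωE
      set Sfin := Finset.univ.filter (fun i => ∃ j ∈ J, δ ω i j = 1) with hSfin
      have hSsubH : (Sfin : Set (Fin m))
          ⊆ {i : Fin m | (1:ℝ)/s ≤ ∑ j, (Φ ω i j)^2 * x j ^ 2} :=
        fun i hi => hheavy ω hωG i ((Finset.mem_filter.1 hi).2)
      have hcard1 : (Sfin.card : ℝ) ≤ r₁ := by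
        calc (Sfin.card : ℝ) = (((Sfin : Set (Fin m)).ncard : ℕ) : ℝ) := by
              rw [Set.ncard_coe_finset]
          _ ≤ (({i : Fin m | (1:ℝ)/s ≤ ∑ j, (Φ ω i j)^2 * x j ^ 2}).ncard : ℝ) := by
              exact_mod_cast Set.ncard_le_ncard hSsubH (Set.toFinite _)
          _ ≤ r₁ := hcon
      have hcard : Sfin.card ≤ t := Nat.le_floor hcard1
      obtain ⟨I, hIsub, hIcard⟩ := Finset.exists_superset_card_eq hcard
        (by simpa [Fintype.card_fin] using htm)
      refine Set.mem_biUnion (Finset.mem_powersetCard.2 ⟨Finset.subset_univ I, hIcard⟩) ?_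
      refine Set.mem_iInter₂.2 fun j hj => ?_
      intro i hiI
      have hiS : i ∉ Sfin := fun h => hiI (hIsub h)
      have hnex : ¬ ∃ j' ∈ J, δ ω i j' = 1 := by
        simpa [hSfin] using hiS
      push_neg at hnex
      exact (hδ01 ω i j).resolve_right (hnex j hj)
    -- conclude
    calc 1 - ENNReal.ofReal (((2:ℝ)^(s*r))⁻¹)
        ≤ 1 - μ E := tsub_le_tsub_left hμE 1
      _ ≤ μ (G ∩ Eᶜ) := by
          have h2 : μ (Gᶜ ∪ E) ≤ μ E := by
            calc μ (Gᶜ ∪ E) ≤ μ Gᶜ + μ E := measure_union_le _ _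
              _ = μ E := by rw [hGc, zero_add]
          have h3' : G ∩ Eᶜ = (Gᶜ ∪ E)ᶜ := by rw [Set.compl_union, compl_compl]
          rw [h3']
          calc 1 - μ E ≤ 1 - μ (Gᶜ ∪ E) := tsub_le_tsub_left h2 1
            _ ≤ μ ((Gᶜ ∪ E)ᶜ) := by
                rw [tsub_le_iff_right]
                calc (1:ℝ≥0∞) = μ Set.univ := measure_univ.symm
                  _ = μ ((Gᶜ ∪ E) ∪ (Gᶜ ∪ E)ᶜ) := by rw [Set.union_compl_self]
                  _ ≤ μ (Gᶜ ∪ E) + μ (Gᶜ ∪ E)ᶜ := measure_union_le _ _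
                  _ = μ ((Gᶜ ∪ E)ᶜ) + μ (Gᶜ ∪ E) := add_comm _ _
      _ ≤ _ := measure_mono hsub


end SDR
end
end

section
/- Let A ∈ ℝ^{m×n} and let σ = (σ₁,…,σ_n) be a vector of independent Rademacher random variables (uniform on {−1,1}). Then for every p ≥ 1: (E ‖Aσ‖₂^p)^{1/p} ≤ ‖A‖_F + 2√(2p) ‖A‖, where ‖A‖_F is the Frobenius norm and ‖A‖ is the ℓ₂→ℓ₂ operator norm. -/
open MeasureTheory ProbabilityTheory
open scoped ENNReal NNReal

noncomputable section

namespace SDR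

namespace Cube

open Real

variable {n : ℕ}

def avg (n : ℕ) (f : (Fin n → Bool) → ℝ) : ℝ := (∑ s, f s) / 2 ^ n

def flip (j : Fin n) (s : Fin n → Bool) : Fin n → Bool := Function.update s j (!s j)

lemma flip_flip (j : Fin n) (s : Fin n → Bool) : flip j (flip j s) = s := by
  funext k
  by_cases h : k = j
  · subst h; simp [flip]
  · simp [flip, Function.update_of_ne h]

lemma flip_involutive (j : Fin n) : Function.Involutive (flip j) := flip_flip j

lemma sum_flip (j : Fin n) (f : (Fin n → Bool) → ℝ) :
    ∑ s, f (flip j s) = ∑ s, f s :=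
  Equiv.sum_comp (flip_involutive j).toPerm f

lemma avg_flip (j : Fin n) (f : (Fin n → Bool) → ℝ) :
    avg n (fun s => f (flip j s)) = avg n f := by
  unfold avg; rw [sum_flip]

lemma avg_le_avg {f g : (Fin n → Bool) → ℝ} (h : ∀ s, f s ≤ g s) :
    avg n f ≤ avg n g :=
  div_le_div_of_nonneg_right (Finset.sum_le_sum fun s _ => h s) (by positivity) |>.trans_eq rfl

lemma avg_nonneg {f : (Fin n → Bool) → ℝ} (h : ∀ s, 0 ≤ f s) : 0 ≤ avg n f :=
  div_nonneg (Finset.sum_nonneg fun s _ => h s) (by positivity)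

lemma avg_pos {f : (Fin n → Bool) → ℝ} (h : ∀ s, 0 < f s) : 0 < avg n f :=
  div_pos (Finset.sum_pos (fun s _ => h s) Finset.univ_nonempty) (by positivity)

lemma avg_const (c : ℝ) : avg n (fun _ => c) = c := by
  unfold avg
  rw [Finset.sum_const, Finset.card_univ]
  have : (Fintype.card (Fin n → Bool) : ℝ) = 2 ^ n := by
    simp [Fintype.card_fun]
  rw [nsmul_eq_mul, this]
  field_simp

lemma avg_smul (c : ℝ) (f : (Fin n → Bool) → ℝ) :
    avg n (fun s => c * f s) = c * avg n f := by
  unfold avg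
  rw [← Finset.mul_sum, mul_div_assoc]

lemma avg_add (f g : (Fin n → Bool) → ℝ) :
    avg n (fun s => f s + g s) = avg n f + avg n g := by
  unfold avg
  rw [Finset.sum_add_distrib, add_div]

lemma avg_sum {ι : Type*} (t : Finset ι) (f : ι → (Fin n → Bool) → ℝ) :
    avg n (fun s => ∑ i ∈ t, f i s) = ∑ i ∈ t, avg n (f i) := by
  unfold avg
  rw [Finset.sum_comm, Finset.sum_div]

/-- the log-sum inequality -/
lemma logSum {ι : Type*} [Fintype ι] [Nonempty ι] (u v : ι → ℝ)
    (hu : ∀ i, 0 < u i) (hv : ∀ i, 0 < v i) :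
    (∑ i, u i) * Real.log ((∑ i, u i) / (∑ i, v i)) ≤ ∑ i, u i * Real.log (u i / v i) := by
  have hU : 0 < ∑ i, u i := Finset.sum_pos (fun i _ => hu i) Finset.univ_nonempty
  have hV : 0 < ∑ i, v i := Finset.sum_pos (fun i _ => hv i) Finset.univ_nonempty
  set U := ∑ i, u i
  set V := ∑ i, v i
  have key : ∀ i, u i * Real.log (U / V) ≤ u i * Real.log (u i / v i)
      - u i + v i * (U / V) := by
    intro i
    have hui := hu i
    have hvi := hv i
    have h1 : Real.log (v i * U / (u i * V)) ≤ v i * U / (u i * V) - 1 :=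
      Real.log_le_sub_one_of_pos (div_pos (mul_pos hvi hU) (mul_pos hui hV))
    have h2 : Real.log (v i * U / (u i * V)) = Real.log (U / V) - Real.log (u i / v i) := by
      rw [Real.log_div (mul_pos hvi hU).ne' (mul_pos hui hV).ne',
        Real.log_mul hvi.ne' hU.ne', Real.log_mul hui.ne' hV.ne',
        Real.log_div hU.ne' hV.ne', Real.log_div hui.ne' hvi.ne']
      ring
    have h3 : u i * Real.log (v i * U / (u i * V)) ≤ u i * (v i * U / (u i * V) - 1) :=
      mul_le_mul_of_nonneg_left h1 (le_of_lt hui)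
    have h4 : u i * (v i * U / (u i * V) - 1) = v i * (U / V) - u i := by
      field_simp
    rw [h2] at h3
    nlinarith [h3]
  calc U * Real.log (U / V) = ∑ i, u i * Real.log (U / V) := by rw [← Finset.sum_mul]
    _ ≤ ∑ i, (u i * Real.log (u i / v i) - u i + v i * (U / V)) :=
        Finset.sum_le_sum fun i _ => key i
    _ = ∑ i, u i * Real.log (u i / v i) - U + V * (U / V) := by
        rw [Finset.sum_add_distrib, Finset.sum_sub_distrib, ← Finset.sum_mul]
    _ = ∑ i, u i * Real.log (u i / v i) := by field_simp; ring

/-- two-point entropy -/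
def entB (a b : ℝ) : ℝ :=
  (a * Real.log a + b * Real.log b) / 2 - ((a + b) / 2) * Real.log ((a + b) / 2)

lemma log_mean_ge {a b : ℝ} (ha : 0 < a) (hb : 0 < b) :
    (Real.log a + Real.log b) / 2 ≤ Real.log ((a + b) / 2) := by
  have h1 : Real.sqrt (a * b) ≤ (a + b) / 2 := by
    nlinarith [Real.sq_sqrt (mul_pos ha hb).le, Real.sqrt_nonneg (a * b),
      sq_nonneg (Real.sqrt a - Real.sqrt b), Real.sq_sqrt ha.le, Real.sq_sqrt hb.le,
      Real.sqrt_mul_self ha.le, Real.sqrt_nonneg a, Real.sqrt_nonneg b,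
      Real.sqrt_mul ha.le b]
  have h2 : Real.log (Real.sqrt (a * b)) ≤ Real.log ((a + b) / 2) :=
    Real.log_le_log (Real.sqrt_pos.2 (mul_pos ha hb)) h1
  rwa [Real.log_sqrt (mul_pos ha hb).le, Real.log_mul ha.ne' hb.ne'] at h2

lemma entB_le_cov {a b : ℝ} (ha : 0 < a) (hb : 0 < b) :
    entB a b ≤ (a - b) * (Real.log a - Real.log b) / 4 := by
  have key := log_mean_ge ha hb
  have m_pos : (0:ℝ) < (a + b) / 2 := by linarith
  have h2 : ((a + b) / 2) * ((Real.log a + Real.log b) / 2) ≤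
      ((a + b) / 2) * Real.log ((a + b) / 2) :=
    mul_le_mul_of_nonneg_left key m_pos.le
  unfold entB
  nlinarith [h2]

lemma entB_eq {a b : ℝ} (ha : 0 < a) (hb : 0 < b) :
    entB a b = (a * Real.log (a / ((a + b) / 2)) + b * Real.log (b / ((a + b) / 2))) / 2 := by
  have m_pos : (0:ℝ) < (a + b) / 2 := by linarith
  unfold entB
  rw [Real.log_div ha.ne' m_pos.ne', Real.log_div hb.ne' m_pos.ne']
  ring

/-- averaging decreases two-point entropy -/
lemma entB_avg (a b : (Fin n → Bool) → ℝ) (ha : ∀ s, 0 < a s) (hb : ∀ s, 0 < b s) :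
    entB (avg n a) (avg n b) ≤ avg n (fun s => entB (a s) (b s)) := by
  set N : ℝ := (2:ℝ) ^ n with hN
  have hNpos : (0:ℝ) < N := by positivity
  have hA : 0 < avg n a := avg_pos ha
  have hB : 0 < avg n b := avg_pos hb
  have hM : 0 < (avg n a + avg n b) / 2 := by linarith
  have havg : ∀ f : (Fin n → Bool) → ℝ, avg n f = ∑ s, f s / N := by
    intro f; unfold avg; rw [Finset.sum_div]
  -- apply logSum twice
  have key : ∀ (u : (Fin n → Bool) → ℝ), (∀ s, 0 < u s) →
      avg n u * Real.log (avg n u / ((avg n a + avg n b) / 2)) ≤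
        avg n (fun s => u s * Real.log (u s / ((a s + b s) / 2))) := by
    intro u hu
    have h := logSum (fun s => u s / N) (fun s => (a s + b s) / 2 / N)
      (fun s => div_pos (hu s) hNpos)
      (fun s => div_pos (by have := ha s; have := hb s; linarith) hNpos)
    have e1 : ∑ s, u s / N = avg n u := (havg u).symm
    have e2 : ∑ s, (a s + b s) / 2 / N = (avg n a + avg n b) / 2 := by
      rw [← havg]
      rw [show (fun s => (a s + b s) / 2) = (fun s => (1/2) * (a s + b s)) by funext s; ring,
        avg_smul, avg_add]
      ring
    rw [e1, e2] at h
    refine h.trans_eq ?_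
    rw [havg (fun s => u s * Real.log (u s / ((a s + b s) / 2)))]
    apply Finset.sum_congr rfl
    intro s _
    have hab : (0:ℝ) < a s + b s := by have := ha s; have := hb s; linarith
    have : u s / N / ((a s + b s) / 2 / N) = u s / ((a s + b s) / 2) := by
      field_simp
    rw [this]
    ring
  have h1 := key a ha
  have h2 := key b hb
  rw [entB_eq hA hB]
  have : avg n (fun s => entB (a s) (b s)) =
      (avg n (fun s => a s * Real.log (a s / ((a s + b s) / 2))) +
       avg n (fun s => b s * Real.log (b s / ((a s + b s) / 2)))) / 2 := by
    rw [← avg_add]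
    rw [show (fun s => (a s * Real.log (a s / ((a s + b s) / 2)) +
        b s * Real.log (b s / ((a s + b s) / 2)))) =
        (fun s => 2 * entB (a s) (b s)) by
      funext s; rw [entB_eq (ha s) (hb s)]; ring]
    rw [avg_smul]
    ring
  rw [this]
  linarith

lemma sum_cube_succ (f : (Fin (n + 1) → Bool) → ℝ) :
    ∑ s, f s = ∑ x : Fin n → Bool, (f (Fin.cons false x) + f (Fin.cons true x)) := by
  rw [← Equiv.sum_comp (Fin.consEquiv fun _ => Bool) f, Fintype.sum_prod_type,
    Fintype.sum_bool, ← Finset.sum_add_distrib]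
  apply Finset.sum_congr rfl
  intro x _
  simp only [Fin.consEquiv, Equiv.coe_fn_mk]
  ring

lemma avg_succ (f : (Fin (n + 1) → Bool) → ℝ) :
    avg (n + 1) f =
      (avg n (fun x => f (Fin.cons false x)) + avg n (fun x => f (Fin.cons true x))) / 2 := by
  unfold avg
  rw [sum_cube_succ, Finset.sum_add_distrib]
  have : (2:ℝ) ^ (n+1) = 2 ^ n * 2 := by ring
  rw [this]
  field_simp

lemma flip_cons_succ (j : Fin n) (b : Bool) (x : Fin n → Bool) :
    flip j.succ (Fin.cons b x) = Fin.cons b (flip j x) := by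
  unfold flip
  simp only [Fin.cons_succ]
  rw [← Fin.cons_update]

lemma flip_cons_zero (b : Bool) (x : Fin n → Bool) :
    flip 0 (Fin.cons b x) = Fin.cons (!b) x := by
  unfold flip
  simp only [Fin.cons_zero]
  rw [Fin.update_cons_zero]

def Ent (n : ℕ) (g : (Fin n → Bool) → ℝ) : ℝ :=
  avg n (fun s => g s * Real.log (g s)) - avg n g * Real.log (avg n g)

/-- entropy tensorization + two-point covariance bound on the discrete cube -/
lemma ent_le (n : ℕ) (g : (Fin n → Bool) → ℝ) (hg : ∀ s, 0 < g s) :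
    Ent n g ≤ (1/4) * ∑ j, avg n (fun s =>
      (g s - g (flip j s)) * (Real.log (g s) - Real.log (g (flip j s)))) := by
  induction n with
  | zero =>
      simp [Ent, avg, Fintype.sum_unique]
  | succ n ih =>
      set g0 : (Fin n → Bool) → ℝ := fun x => g (Fin.cons false x) with hg0
      set g1 : (Fin n → Bool) → ℝ := fun x => g (Fin.cons true x) with hg1
      have hg0p : ∀ x, 0 < g0 x := fun x => hg _
      have hg1p : ∀ x, 0 < g1 x := fun x => hg _
      set A0 := avg n g0
      set A1 := avg n g1
      have hA0 : 0 < A0 := avg_pos hg0p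
      have hA1 : 0 < A1 := avg_pos hg1p
      -- entropy decomposition
      have hdec : Ent (n+1) g = (Ent n g0 + Ent n g1) / 2 + entB A0 A1 := by
        unfold Ent entB
        rw [avg_succ g, avg_succ (fun s => g s * Real.log (g s))]
        ring
      -- RHS decomposition
      set T : Fin (n+1) → (Fin (n+1) → Bool) → ℝ := fun j s =>
        (g s - g (flip j s)) * (Real.log (g s) - Real.log (g (flip j s))) with hT
      have hTsucc : ∀ j : Fin n, avg (n+1) (T j.succ) =
          (avg n (fun x => (g0 x - g0 (flip j x)) *
              (Real.log (g0 x) - Real.log (g0 (flip j x)))) +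
           avg n (fun x => (g1 x - g1 (flip j x)) *
              (Real.log (g1 x) - Real.log (g1 (flip j x))))) / 2 := by
        intro j
        rw [avg_succ (T j.succ)]
        have e0 : (fun x => T j.succ (Fin.cons false x)) =
            (fun x => (g0 x - g0 (flip j x)) * (Real.log (g0 x) - Real.log (g0 (flip j x)))) := by
          funext x
          simp only [hT, flip_cons_succ]
          rfl
        have e1 : (fun x => T j.succ (Fin.cons true x)) =
            (fun x => (g1 x - g1 (flip j x)) * (Real.log (g1 x) - Real.log (g1 (flip j x)))) := by
          funext x
          simp only [hT, flip_cons_succ]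
          rfl
        rw [e0, e1]
      have hTzero : avg (n+1) (T 0) =
          avg n (fun x => (g0 x - g1 x) * (Real.log (g0 x) - Real.log (g1 x))) := by
        rw [avg_succ (T 0)]
        have e0 : (fun x => T 0 (Fin.cons false x)) =
            (fun x => (g0 x - g1 x) * (Real.log (g0 x) - Real.log (g1 x))) := by
          funext x
          simp only [hT, flip_cons_zero]
          rfl
        have e1 : (fun x => T 0 (Fin.cons true x)) =
            (fun x => (g0 x - g1 x) * (Real.log (g0 x) - Real.log (g1 x))) := by
          funext x
          simp only [hT, flip_cons_zero]
          show (g1 x - g0 x) * (Real.log (g1 x) - Real.log (g0 x)) = _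
          ring
        rw [e0, e1]
        ring
      have hentB : entB A0 A1 ≤
          (1/4) * avg n (fun x => (g0 x - g1 x) * (Real.log (g0 x) - Real.log (g1 x))) := by
        calc entB A0 A1 ≤ avg n (fun x => entB (g0 x) (g1 x)) := entB_avg g0 g1 hg0p hg1p
          _ ≤ avg n (fun x => (1/4) * ((g0 x - g1 x) * (Real.log (g0 x) - Real.log (g1 x)))) := by
              apply avg_le_avg
              intro x
              have := entB_le_cov (hg0p x) (hg1p x)
              linarith
          _ = (1/4) * avg n (fun x => (g0 x - g1 x) * (Real.log (g0 x) - Real.log (g1 x))) :=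
              avg_smul _ _
      have ih0 := ih g0 hg0p
      have ih1 := ih g1 hg1p
      rw [hdec]
      rw [show (∑ j : Fin (n+1), avg (n+1) (T j)) =
          avg (n+1) (T 0) + ∑ j : Fin n, avg (n+1) (T j.succ) from Fin.sum_univ_succ _]
      rw [hTzero]
      have hsum : ∑ j : Fin n, avg (n+1) (T j.succ) =
          ((∑ j : Fin n, avg n (fun x => (g0 x - g0 (flip j x)) *
              (Real.log (g0 x) - Real.log (g0 (flip j x))))) +
           (∑ j : Fin n, avg n (fun x => (g1 x - g1 (flip j x)) *
              (Real.log (g1 x) - Real.log (g1 (flip j x)))))) / 2 := by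
        rw [← Finset.sum_add_distrib, Finset.sum_div]
        apply Finset.sum_congr rfl
        intro j _
        exact hTsucc j
      rw [hsum]
      linarith [ih0, ih1, hentB]

lemma exp_pair_aux (t a b : ℝ) (ht : 0 ≤ t) (h : b ≤ a) :
    (Real.exp (t*a) - Real.exp (t*b)) * (t*a - t*b) ≤
      t^2 * ((max (a-b) 0)^2 * Real.exp (t*a) + (max (b-a) 0)^2 * Real.exp (t*b)) := by
  have h1 : t*b ≤ t*a := mul_le_mul_of_nonneg_left h ht
  have h3 : (t*b - t*a + 1) * Real.exp (t*a) ≤ Real.exp (t*b) := by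
    have h4 := mul_le_mul_of_nonneg_right (Real.add_one_le_exp (t*b - t*a))
      (Real.exp_pos (t*a)).le
    rwa [← Real.exp_add, sub_add_cancel] at h4
  have h2 : Real.exp (t*a) - Real.exp (t*b) ≤ (t*a - t*b) * Real.exp (t*a) := by nlinarith
  have hmax : max (a-b) 0 = a - b := max_eq_left (by linarith)
  have hmax2 : max (b-a) 0 = 0 := max_eq_right (by linarith)
  rw [hmax, hmax2]
  have hfac : 0 ≤ t*a - t*b := by linarith
  calc (Real.exp (t*a) - Real.exp (t*b)) * (t*a - t*b)
      ≤ ((t*a - t*b) * Real.exp (t*a)) * (t*a - t*b) := mul_le_mul_of_nonneg_right h2 hfac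
    _ = t^2 * ((a-b)^2 * Real.exp (t*a)) := by ring
    _ ≤ t^2 * ((a-b)^2 * Real.exp (t*a) + 0^2 * Real.exp (t*b)) := by
        have := (Real.exp_pos (t*b)).le
        nlinarith [sq_nonneg t]

lemma exp_pair (t a b : ℝ) (ht : 0 ≤ t) :
    (Real.exp (t*a) - Real.exp (t*b)) * (t*a - t*b) ≤
      t^2 * ((max (a-b) 0)^2 * Real.exp (t*a) + (max (b-a) 0)^2 * Real.exp (t*b)) := by
  rcases le_total b a with h | h
  · exact exp_pair_aux t a b ht h
  · have H := exp_pair_aux t b a ht h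
    calc (Real.exp (t*a) - Real.exp (t*b)) * (t*a - t*b)
        = (Real.exp (t*b) - Real.exp (t*a)) * (t*b - t*a) := by ring
      _ ≤ t^2 * ((max (b-a) 0)^2 * Real.exp (t*b) + (max (a-b) 0)^2 * Real.exp (t*a)) := H
      _ = t^2 * ((max (a-b) 0)^2 * Real.exp (t*a) + (max (b-a) 0)^2 * Real.exp (t*b)) := by ring

variable (Z : (Fin n → Bool) → ℝ) (v : ℝ)

lemma ent_exp_le (hv : ∀ s, ∑ j, (max (Z s - Z (flip j s)) 0)^2 ≤ v) (t : ℝ) (ht : 0 < t) :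
    t * avg n (fun s => Z s * Real.exp (t * Z s)) -
      avg n (fun s => Real.exp (t * Z s)) * Real.log (avg n (fun s => Real.exp (t * Z s))) ≤
    (t^2 * v / 2) * avg n (fun s => Real.exp (t * Z s)) := by
  have hEnt := ent_le n (fun s => Real.exp (t * Z s)) (fun s => Real.exp_pos _)
  have hL : Ent n (fun s => Real.exp (t * Z s)) =
      t * avg n (fun s => Z s * Real.exp (t * Z s)) -
        avg n (fun s => Real.exp (t * Z s)) * Real.log (avg n (fun s => Real.exp (t * Z s))) := by
    unfold Ent
    have : (fun s => Real.exp (t * Z s) * Real.log (Real.exp (t * Z s))) =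
        (fun s => t * (Z s * Real.exp (t * Z s))) := by
      funext s; rw [Real.log_exp]; ring
    rw [this, avg_smul]
  rw [← hL]
  refine hEnt.trans ?_
  have step1 : ∀ j : Fin n, avg n (fun s =>
      (Real.exp (t * Z s) - Real.exp (t * Z (flip j s))) *
        (Real.log (Real.exp (t * Z s)) - Real.log (Real.exp (t * Z (flip j s))))) ≤
      2 * (t^2 * avg n (fun s => (max (Z s - Z (flip j s)) 0)^2 * Real.exp (t * Z s))) := by
    intro j
    have hpt : ∀ s, (Real.exp (t * Z s) - Real.exp (t * Z (flip j s))) *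
        (Real.log (Real.exp (t * Z s)) - Real.log (Real.exp (t * Z (flip j s)))) ≤
        t^2 * ((max (Z s - Z (flip j s)) 0)^2 * Real.exp (t * Z s) +
          (max (Z (flip j s) - Z s) 0)^2 * Real.exp (t * Z (flip j s))) := by
      intro s
      rw [Real.log_exp, Real.log_exp]
      exact exp_pair t (Z s) (Z (flip j s)) ht.le
    refine (avg_le_avg hpt).trans ?_
    have e1 : avg n (fun s => t^2 * ((max (Z s - Z (flip j s)) 0)^2 * Real.exp (t * Z s) +
        (max (Z (flip j s) - Z s) 0)^2 * Real.exp (t * Z (flip j s)))) =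
        t^2 * avg n (fun s => (max (Z s - Z (flip j s)) 0)^2 * Real.exp (t * Z s)) +
        t^2 * avg n (fun s => (max (Z (flip j s) - Z s) 0)^2 * Real.exp (t * Z (flip j s))) := by
      rw [avg_smul, avg_add]
      ring
    have e2 : avg n (fun s => (max (Z (flip j s) - Z s) 0)^2 * Real.exp (t * Z (flip j s))) =
        avg n (fun s => (max (Z s - Z (flip j s)) 0)^2 * Real.exp (t * Z s)) := by
      have := avg_flip j (fun s => (max (Z s - Z (flip j s)) 0)^2 * Real.exp (t * Z s))
      rw [← this]
      apply congrArg
      funext s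
      rw [flip_flip]
    rw [e1, e2]
    ring_nf
    exact le_refl _
  calc (1/4) * ∑ j, avg n (fun s =>
        (Real.exp (t * Z s) - Real.exp (t * Z (flip j s))) *
          (Real.log (Real.exp (t * Z s)) - Real.log (Real.exp (t * Z (flip j s))))) ≤
      (1/4) * ∑ j, 2 * (t^2 * avg n (fun s =>
        (max (Z s - Z (flip j s)) 0)^2 * Real.exp (t * Z s))) := by
        apply mul_le_mul_of_nonneg_left _ (by norm_num)
        exact Finset.sum_le_sum fun j _ => step1 j
    _ = (t^2/2) * ∑ j, avg n (fun s => (max (Z s - Z (flip j s)) 0)^2 * Real.exp (t * Z s)) := by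
        rw [Finset.mul_sum, Finset.mul_sum]
        apply Finset.sum_congr rfl
        intro j _
        ring
    _ = (t^2/2) * avg n (fun s => Real.exp (t * Z s) * ∑ j, (max (Z s - Z (flip j s)) 0)^2) := by
        rw [← avg_sum]
        apply congrArg
        apply congrArg
        funext s
        rw [Finset.mul_sum]
        apply Finset.sum_congr rfl
        intro j _
        ring
    _ ≤ (t^2/2) * avg n (fun s => Real.exp (t * Z s) * v) := by
        apply mul_le_mul_of_nonneg_left _ (by positivity)
        apply avg_le_avg
        intro s
        exact mul_le_mul_of_nonneg_left (hv s) (Real.exp_pos _).le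
    _ = (t^2 * v / 2) * avg n (fun s => Real.exp (t * Z s)) := by
        rw [show (fun s => Real.exp (t * Z s) * v) = (fun s => v * Real.exp (t * Z s)) by
          funext s; ring, avg_smul]
        ring

lemma mgf_le (hv : ∀ s, ∑ j, (max (Z s - Z (flip j s)) 0)^2 ≤ v)
    (lam : ℝ) (hlam : 0 < lam) :
    avg n (fun s => Real.exp (lam * (Z s - avg n Z))) ≤ Real.exp (lam^2 * v / 2) := by
  classical
  set W := avg n Z with hW
  set H : ℝ → ℝ := fun t => avg n (fun s => Real.exp (t * Z s)) with hH
  set Hd : ℝ → ℝ := fun t => avg n (fun s => Z s * Real.exp (t * Z s)) with hHd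
  have hHpos : ∀ t, 0 < H t := fun t => avg_pos (fun s => Real.exp_pos _)
  have hderiv : ∀ t : ℝ, HasDerivAt H (Hd t) t := by
    intro t
    have h1 : ∀ s ∈ (Finset.univ : Finset (Fin n → Bool)),
        HasDerivAt (fun u : ℝ => Real.exp (u * Z s)) (Real.exp (t * Z s) * Z s) t :=
      fun s _ => (hasDerivAt_mul_const (Z s)).exp
    have h2 := HasDerivAt.sum h1
    have h3 := h2.div_const ((2:ℝ)^n)
    have e1 : (fun x => (∑ i, fun u : ℝ => Real.exp (u * Z i)) x / (2:ℝ)^n) = H := by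
      funext u; simp only [hH, avg, Finset.sum_apply]
    have e2 : (∑ s, Real.exp (t * Z s) * Z s) / (2:ℝ)^n = Hd t := by
      simp only [hHd, avg]
      congr 1
      apply Finset.sum_congr rfl
      intro s _
      ring
    rw [e1, e2] at h3
    exact h3
  have hent : ∀ t : ℝ, 0 < t → t * Hd t - H t * Real.log (H t) ≤ (t^2 * v / 2) * H t :=
    fun t ht => ent_exp_le Z v hv t ht
  set φ : ℝ → ℝ := fun t => Real.log (H t) / t - t * (v/2) with hφ
  have hφderiv : ∀ t ∈ Set.Ioi (0:ℝ), HasDerivAt φ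
      ((Hd t / H t * t - Real.log (H t) * 1) / t^2 - v/2) t := by
    intro t ht
    have hlog : HasDerivAt (fun u => Real.log (H u)) (Hd t / H t) t :=
      (hderiv t).log (hHpos t).ne'
    have hdiv : HasDerivAt (fun u => Real.log (H u) / u)
        ((Hd t / H t * t - Real.log (H t) * 1) / t^2) t :=
      hlog.div (hasDerivAt_id t) (ne_of_gt (Set.mem_Ioi.mp ht))
    have hlin : HasDerivAt (fun u : ℝ => u * (v/2)) (v/2) t := hasDerivAt_mul_const (v/2)
    exact hdiv.sub hlin
  have hφd_nonpos : ∀ t ∈ Set.Ioi (0:ℝ),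
      (Hd t / H t * t - Real.log (H t) * 1) / t^2 - v/2 ≤ 0 := by
    intro t ht
    have ht' : (0:ℝ) < t := ht
    have h1 := hent t ht'
    have hHt := hHpos t
    have h2 : Hd t / H t * t - Real.log (H t) * 1 =
        (t * Hd t - H t * Real.log (H t)) / H t := by
      field_simp
    rw [h2, div_div, sub_nonpos, div_le_iff₀ (by positivity)]
    calc t * Hd t - H t * Real.log (H t) ≤ (t^2 * v/2) * H t := h1
      _ = v/2 * (H t * t^2) := by ring
  have hanti : AntitoneOn φ (Set.Ioi (0:ℝ)) := by
    apply antitoneOn_of_deriv_nonpos (convex_Ioi 0)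
    · intro x hx
      exact (hφderiv x hx).differentiableAt.continuousAt.continuousWithinAt
    · intro x hx
      rw [interior_Ioi] at hx
      exact (hφderiv x hx).differentiableAt.differentiableWithinAt
    · intro x hx
      rw [interior_Ioi] at hx
      rw [(hφderiv x hx).deriv]
      exact hφd_nonpos x hx
  have hH0 : H 0 = 1 := by
    simp only [hH]
    rw [show (fun s => Real.exp (0 * Z s)) = (fun _ => (1:ℝ)) by funext s; simp]
    exact avg_const 1
  have hlogH0 : Real.log (H 0) = 0 := by rw [hH0, Real.log_one]
  have hHd0 : Hd 0 = W := by
    simp only [hHd, hW]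
    apply congrArg
    funext s
    simp
  have hlim : Filter.Tendsto φ (nhdsWithin 0 (Set.Ioi 0)) (nhds W) := by
    have hu : HasDerivAt (fun u => Real.log (H u)) W 0 := by
      have := (hderiv 0).log (hHpos 0).ne'
      rwa [hHd0, hH0, div_one] at this
    have hslope := hasDerivAt_iff_tendsto_slope.mp hu
    have hmono : nhdsWithin (0:ℝ) (Set.Ioi 0) ≤ nhdsWithin 0 {(0:ℝ)}ᶜ :=
      nhdsWithin_mono 0 (fun x hx => ne_of_gt hx)
    have h1 : Filter.Tendsto (fun t => Real.log (H t) / t)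
        (nhdsWithin 0 (Set.Ioi 0)) (nhds W) := by
      refine (hslope.mono_left hmono).congr (fun t => ?_)
      rw [slope_def_field, hlogH0, sub_zero, sub_zero]
    have h2 : Filter.Tendsto (fun t : ℝ => t * (v/2))
        (nhdsWithin 0 (Set.Ioi 0)) (nhds 0) := by
      have hc : Filter.Tendsto (fun t : ℝ => t * (v/2)) (nhds 0) (nhds (0 * (v/2))) :=
        (continuous_id.mul continuous_const).tendsto 0
      rw [zero_mul] at hc
      exact hc.mono_left nhdsWithin_le_nhds
    have := h1.sub h2
    rwa [sub_zero] at this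
  have hphile : φ lam ≤ W := by
    apply ge_of_tendsto hlim
    filter_upwards [Ioc_mem_nhdsGT_of_mem (Set.left_mem_Ico.mpr hlam)] with t ht
    exact hanti ht.1 (Set.mem_Ioi.mpr hlam) ht.2
  have hlogle : Real.log (H lam) ≤ lam * W + lam^2 * (v/2) := by
    have h0 : Real.log (H lam) / lam - lam * (v/2) ≤ W := hphile
    have h2 : (Real.log (H lam) / lam) * lam ≤ (W + lam * (v/2)) * lam :=
      mul_le_mul_of_nonneg_right (by linarith) hlam.le
    rw [div_mul_cancel₀ _ hlam.ne'] at h2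
    nlinarith
  have key : avg n (fun s => Real.exp (lam * (Z s - W))) = Real.exp (-(lam*W)) * H lam := by
    rw [show (fun s => Real.exp (lam * (Z s - W))) =
        (fun s => Real.exp (-(lam*W)) * Real.exp (lam * Z s)) by
      funext s
      rw [← Real.exp_add]
      congr 1
      ring]
    exact avg_smul _ _
  rw [key]
  have hrw : H lam = Real.exp (Real.log (H lam)) := (Real.exp_log (hHpos lam)).symm
  rw [hrw, ← Real.exp_add]
  apply Real.exp_le_exp.mpr
  nlinarith

lemma rpow_le_exp_aux {p lam x : ℝ} (hp : 1 ≤ p) (hlam : 0 < lam) (hx : 0 ≤ x) :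
    x ^ p ≤ (p / (Real.exp 1 * lam)) ^ p * Real.exp (lam * x) := by
  have hp0 : (0:ℝ) < p := lt_of_lt_of_le one_pos hp
  have hc : (0:ℝ) < p / (Real.exp 1 * lam) := by positivity
  rcases eq_or_lt_of_le hx with h | hx'
  · rw [← h, Real.zero_rpow hp0.ne']
    positivity
  · rw [Real.rpow_def_of_pos hx', Real.rpow_def_of_pos hc, ← Real.exp_add]
    apply Real.exp_le_exp.mpr
    have hu : Real.log (lam * x / p) ≤ lam * x / p - 1 :=
      Real.log_le_sub_one_of_pos (by positivity)
    have hpl : (0:ℝ) < p / lam := by positivity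
    have hlx : (0:ℝ) < lam * x / p := by positivity
    have hlogx : Real.log x = Real.log (p / lam) + Real.log (lam * x / p) := by
      rw [← Real.log_mul hpl.ne' hlx.ne']
      congr 1
      field_simp
    have helam : (0:ℝ) < Real.exp 1 * lam := by positivity
    have hlogc : Real.log (p / (Real.exp 1 * lam)) = Real.log (p / lam) - 1 := by
      rw [Real.log_div hp0.ne' helam.ne',
        Real.log_mul (Real.exp_pos 1).ne' hlam.ne', Real.log_exp,
        Real.log_div hp0.ne' hlam.ne']
      ring
    rw [hlogx, hlogc]
    have h2 := mul_le_mul_of_nonneg_left hu hp0.le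
    have heq : p * (lam * x / p - 1) = lam * x - p := by field_simp
    nlinarith

lemma cube_moment (n : ℕ) (Z : (Fin n → Bool) → ℝ) (hZ : ∀ s, 0 ≤ Z s)
    (v : ℝ) (hv0 : 0 < v)
    (hv : ∀ s, ∑ j, (max (Z s - Z (flip j s)) 0)^2 ≤ v)
    (F : ℝ) (hF0 : 0 ≤ F) (hF : avg n (fun s => (Z s)^2) ≤ F^2)
    (p : ℝ) (hp : 1 ≤ p) :
    (avg n (fun s => Z s ^ p)) ^ (1/p) ≤ F + Real.sqrt (2*p*v) := by
  classical
  have hp0 : (0:ℝ) < p := lt_of_lt_of_le one_pos hp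
  have hcard : (Fintype.card (Fin n → Bool) : ℝ) = 2 ^ n := by
    simp [Fintype.card_fun]
  set W := avg n Z with hW
  have hW0 : 0 ≤ W := avg_nonneg hZ
  have hWF : W ≤ F := by
    have h1 : (∑ s, Z s)^2 ≤ (Fintype.card (Fin n → Bool) : ℝ) * ∑ s, (Z s)^2 := by
      exact_mod_cast sq_sum_le_card_mul_sum_sq (s := Finset.univ) (f := Z)
    have hN : (0:ℝ) < 2^n := by positivity
    have h2 : W^2 ≤ avg n (fun s => (Z s)^2) := by
      rw [hW]
      unfold avg
      rw [div_pow, div_le_div_iff₀ (by positivity) hN]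
      calc (∑ s, Z s)^2 * 2^n ≤ ((2:ℝ)^n * ∑ s, (Z s)^2) * 2^n := by
            rw [hcard] at h1
            exact mul_le_mul_of_nonneg_right h1 hN.le
        _ = (∑ s, (Z s)^2) * ((2:ℝ)^n)^2 := by ring
    nlinarith [h2.trans hF]
  set Y : (Fin n → Bool) → ℝ := fun s => max (Z s - W) 0 with hY
  have hY0 : ∀ s, 0 ≤ Y s := fun s => le_max_right _ _
  have hZle : ∀ s, Z s ≤ W + Y s := by
    intro s
    have := le_max_left (Z s - W) 0
    simp only [hY]
    linarith
  set lam := Real.sqrt (p / v) with hlam_def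
  have hlam : 0 < lam := Real.sqrt_pos.mpr (by positivity)
  have hlam2 : lam^2 = p/v := Real.sq_sqrt (by positivity)
  have hmgf := mgf_le Z v hv lam hlam
  have hexp_half : lam^2 * v / 2 = p/2 := by
    rw [hlam2]
    field_simp
  rw [hexp_half] at hmgf
  set c := p / (Real.exp 1 * lam) with hc_def
  have hc : 0 < c := by positivity
  have hYp : avg n (fun s => Y s ^ p) ≤ c ^ p * (Real.exp (p/2) + 1) := by
    have h1 : ∀ s, Y s ^ p ≤ c ^ p * Real.exp (lam * Y s) :=
      fun s => rpow_le_exp_aux hp hlam (hY0 s)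
    have h2 : ∀ s, Real.exp (lam * Y s) ≤ Real.exp (lam * (Z s - W)) + 1 := by
      intro s
      rcases le_or_gt (Z s - W) 0 with h | h
      · have hYs : Y s = 0 := max_eq_right h
        rw [hYs, mul_zero, Real.exp_zero]
        have := Real.exp_pos (lam * (Z s - W))
        linarith
      · have hYs : Y s = Z s - W := max_eq_left h.le
        rw [hYs]
        linarith
    calc avg n (fun s => Y s ^ p)
        ≤ avg n (fun s => c ^ p * Real.exp (lam * Y s)) := avg_le_avg h1
      _ = c ^ p * avg n (fun s => Real.exp (lam * Y s)) := avg_smul _ _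
      _ ≤ c ^ p * avg n (fun s => Real.exp (lam * (Z s - W)) + 1) := by
          apply mul_le_mul_of_nonneg_left (avg_le_avg h2)
          positivity
      _ = c ^ p * (avg n (fun s => Real.exp (lam * (Z s - W))) + 1) := by
          rw [show (fun s => Real.exp (lam * (Z s - W)) + 1) =
            (fun s => Real.exp (lam * (Z s - W)) + (fun _ => (1:ℝ)) s) from rfl, avg_add,
            avg_const]
      _ ≤ c ^ p * (Real.exp (p/2) + 1) := by
          apply mul_le_mul_of_nonneg_left _ (by positivity)
          linarith [hmgf]
  have havgY0 : 0 ≤ avg n (fun s => Y s ^ p) :=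
    avg_nonneg fun s => Real.rpow_nonneg (hY0 s) p
  -- Minkowski
  have hmink : (avg n (fun s => Z s ^ p)) ^ (1/p) ≤
      W + (avg n (fun s => Y s ^ p)) ^ (1/p) := by
    set N : ℝ := (2:ℝ)^n with hN_def
    have hN : (0:ℝ) < N := by positivity
    set cc : ℝ := N ^ (-(1/p)) with hcc_def
    have hcc : 0 < cc := Real.rpow_pos_of_pos hN _
    have hccp : cc ^ p = N⁻¹ := by
      rw [hcc_def, ← Real.rpow_mul hN.le]
      rw [show (-(1/p))*p = -1 by field_simp]
      exact Real.rpow_neg_one N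
    have hsum_eq : ∀ (f : (Fin n → Bool) → ℝ), (∀ s, 0 ≤ f s) →
        ∑ s, (f s * cc)^p = avg n (fun s => f s ^ p) := by
      intro f hf
      have he : ∀ s, (f s * cc)^p = f s ^ p / N := by
        intro s
        rw [Real.mul_rpow (hf s) hcc.le, hccp, div_eq_mul_inv]
      calc ∑ s, (f s * cc)^p = ∑ s, f s ^ p / N :=
            Finset.sum_congr rfl (fun s _ => he s)
        _ = (∑ s, f s ^ p) / N := by rw [Finset.sum_div]
        _ = avg n (fun s => f s ^ p) := rfl
    have hLp := Real.Lp_add_le_of_nonneg (s := Finset.univ)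
      (f := fun s : Fin n → Bool => W * cc) (g := fun s => Y s * cc) hp
      (fun s _ => by positivity) (fun s _ => mul_nonneg (hY0 s) hcc.le)
    have e1 : ∑ s : Fin n → Bool, ((fun s : Fin n → Bool => W * cc) s + (fun s => Y s * cc) s)^p
        = avg n (fun s => (W + Y s) ^ p) := by
      rw [← hsum_eq (fun s => W + Y s) (fun s => (hZ s).trans (hZle s))]
      apply Finset.sum_congr rfl
      intro s _
      congr 1
      ring
    have e2 : ∑ s : Fin n → Bool, ((fun s : Fin n → Bool => W * cc) s)^p = W ^ p := by
      rw [hsum_eq (fun _ => W) (fun _ => hW0)]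
      exact avg_const _
    have e3 : ∑ s : Fin n → Bool, ((fun s : Fin n → Bool => Y s * cc) s)^p
        = avg n (fun s => Y s ^ p) := hsum_eq Y hY0
    rw [e1, e2, e3] at hLp
    have e4 : (W ^ p) ^ (1/p) = W := by
      rw [← Real.rpow_mul hW0, mul_one_div_cancel hp0.ne', Real.rpow_one]
    rw [e4] at hLp
    refine le_trans ?_ hLp
    apply Real.rpow_le_rpow (avg_nonneg fun s => Real.rpow_nonneg (hZ s) p)
    · apply avg_le_avg
      intro s
      exact Real.rpow_le_rpow (hZ s) (hZle s) hp0.le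
    · positivity
  -- bound the Y term
  have hYterm : (avg n (fun s => Y s ^ p)) ^ (1/p) ≤ Real.sqrt (2*p*v) := by
    have h1 : (avg n (fun s => Y s ^ p))^(1/p) ≤ (c^p * (Real.exp (p/2)+1))^(1/p) :=
      Real.rpow_le_rpow havgY0 hYp (by positivity)
    have h2 : (c^p * (Real.exp (p/2)+1))^(1/p) = c * (Real.exp (p/2)+1)^(1/p) := by
      rw [Real.mul_rpow (by positivity) (by positivity), ← Real.rpow_mul hc.le,
        mul_one_div_cancel hp0.ne', Real.rpow_one]
    have hexpge1 : (1:ℝ) ≤ Real.exp (p/2) := by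
      rw [show (1:ℝ) = Real.exp 0 from (Real.exp_zero).symm]
      exact Real.exp_le_exp.mpr (by linarith)
    have h3 : (Real.exp (p/2)+1)^(1/p) ≤ (2*Real.exp (p/2))^(1/p) :=
      Real.rpow_le_rpow (by positivity) (by linarith) (by positivity)
    have h4 : ((2:ℝ)*Real.exp (p/2))^(1/p) = 2^(1/p) * Real.exp (1/2 : ℝ) := by
      rw [Real.mul_rpow (by norm_num) (Real.exp_pos _).le]
      congr 1
      rw [Real.rpow_def_of_pos (Real.exp_pos _), Real.log_exp]
      congr 1
      field_simp
    have h5 : (2:ℝ)^(1/p) ≤ 2 := by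
      calc (2:ℝ)^(1/p) ≤ (2:ℝ)^(1:ℝ) :=
            Real.rpow_le_rpow_of_exponent_le one_le_two ((div_le_one hp0).mpr hp)
        _ = 2 := Real.rpow_one 2
    have he2 : Real.exp (1/2 : ℝ) * Real.exp (1/2 : ℝ) = Real.exp 1 := by
      rw [← Real.exp_add]
      norm_num
    have hsqrt2exp : Real.sqrt 2 ≤ Real.exp (1/2 : ℝ) := by
      have hs : Real.sqrt 2 ≤ Real.sqrt (Real.exp 1) :=
        Real.sqrt_le_sqrt (by linarith [Real.add_one_le_exp (1:ℝ)])
      rwa [show Real.sqrt (Real.exp 1) = Real.exp (1/2 : ℝ) from by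
        rw [← he2, Real.sqrt_mul_self (Real.exp_pos _).le]] at hs
    have hlamv : lam * Real.sqrt (p*v) = p := by
      rw [hlam_def, ← Real.sqrt_mul (by positivity : (0:ℝ) ≤ p/v)]
      rw [show p/v*(p*v) = p^2 by field_simp]
      exact Real.sqrt_sq hp0.le
    have hsplit : Real.sqrt (2*p*v) = Real.sqrt 2 * Real.sqrt (p*v) := by
      rw [mul_assoc, Real.sqrt_mul (by norm_num : (0:ℝ) ≤ 2)]
    have hkey : 2 * Real.exp (1/2 : ℝ) ≤ Real.sqrt 2 * Real.exp 1 := by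
      have h6 : Real.sqrt 2 * Real.sqrt 2 ≤ Real.sqrt 2 * Real.exp (1/2 : ℝ) :=
        mul_le_mul_of_nonneg_left hsqrt2exp (Real.sqrt_nonneg 2)
      have h7 : Real.sqrt 2 * Real.sqrt 2 = 2 := Real.mul_self_sqrt (by norm_num)
      calc 2 * Real.exp (1/2 : ℝ)
          ≤ (Real.sqrt 2 * Real.exp (1/2 : ℝ)) * Real.exp (1/2 : ℝ) := by
            apply mul_le_mul_of_nonneg_right _ (Real.exp_pos _).le
            linarith
        _ = Real.sqrt 2 * Real.exp 1 := by rw [mul_assoc, he2]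
    have hcbound : c * (2 * Real.exp (1/2 : ℝ)) ≤ Real.sqrt (2*p*v) := by
      rw [hsplit, hc_def, div_mul_eq_mul_div, div_le_iff₀ (by positivity)]
      have hr : Real.sqrt 2 * Real.sqrt (p*v) * (Real.exp 1 * lam) =
          Real.sqrt 2 * Real.exp 1 * p := by
        linear_combination (Real.sqrt 2 * Real.exp 1) * hlamv
      rw [hr]
      nlinarith [hkey, hp0]
    calc (avg n (fun s => Y s ^ p))^(1/p) ≤ c * (Real.exp (p/2)+1)^(1/p) := by
          rw [← h2]; exact h1
      _ ≤ c * (2^(1/p) * Real.exp (1/2 : ℝ)) := by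
          apply mul_le_mul_of_nonneg_left _ hc.le
          rw [← h4]
          exact h3
      _ ≤ c * (2 * Real.exp (1/2 : ℝ)) := by
          apply mul_le_mul_of_nonneg_left _ hc.le
          exact mul_le_mul_of_nonneg_right h5 (Real.exp_pos _).le
      _ ≤ Real.sqrt (2*p*v) := hcbound
  linarith [hmink, hYterm, hWF,
    Real.rpow_nonneg havgY0 (1/p)]

end Cube

namespace LinAlg

variable {m n : ℕ}

lemma l2_nonneg {ι : Type*} [Fintype ι] (v : ι → ℝ) : 0 ≤ l2 v := Real.sqrt_nonneg _

lemma l2_sq {ι : Type*} [Fintype ι] (v : ι → ℝ) : (l2 v) ^ 2 = ∑ i, v i ^ 2 :=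
  Real.sq_sqrt (by positivity)

lemma dot_le_l2 {ι : Type*} [Fintype ι] (v w : ι → ℝ) : ∑ i, v i * w i ≤ l2 v * l2 w :=
  Real.sum_mul_le_sqrt_mul_sqrt _ _ _

lemma l2_eq_zero {ι : Type*} [Fintype ι] {v : ι → ℝ} (h : l2 v = 0) : v = 0 := by
  have h2 : ∑ i, v i ^ 2 = 0 := by
    have := l2_sq v
    rw [h] at this
    simpa using this.symm
  funext i
  have := (Finset.sum_eq_zero_iff_of_nonneg (fun i _ => sq_nonneg (v i))).mp h2 i
    (Finset.mem_univ i)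
  exact (pow_eq_zero_iff two_ne_zero).mp this

lemma l2_smul {ι : Type*} [Fintype ι] (c : ℝ) (v : ι → ℝ) : l2 (c • v) = |c| * l2 v := by
  unfold l2
  rw [show (∑ i, (c • v) i ^ 2) = c^2 * ∑ i, v i ^ 2 by
    rw [Finset.mul_sum]; apply Finset.sum_congr rfl; intro i _; simp [smul_eq_mul]; ring]
  rw [Real.sqrt_mul (sq_nonneg c), Real.sqrt_sq_eq_abs]

lemma mulVec_frob_bound (A : Matrix (Fin m) (Fin n) ℝ) (x : Fin n → ℝ) (hx : sqSum x = 1) :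
    l2 (A.mulVec x) ≤ Real.sqrt (∑ i, ∑ j, A i j ^ 2) := by
  unfold l2
  apply Real.sqrt_le_sqrt
  calc ∑ i, (A.mulVec x) i ^ 2 ≤ ∑ i, ((∑ j, A i j ^ 2) * ∑ j, x j ^ 2) := by
        apply Finset.sum_le_sum
        intro i _
        show (∑ j, A i j * x j) ^ 2 ≤ _
        exact Finset.sum_mul_sq_le_sq_mul_sq _ _ _
    _ = ∑ i, ∑ j, A i j ^ 2 := by
        apply Finset.sum_congr rfl
        intro i _
        rw [show (∑ j, x j ^ 2) = 1 from hx, mul_one]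

lemma bddAbove_sphere (A : Matrix (Fin m) (Fin n) ℝ) :
    BddAbove (Set.range fun u : {x : Fin n → ℝ // sqSum x = 1} => l2 (A.mulVec u.1)) := by
  refine ⟨Real.sqrt (∑ i, ∑ j, A i j ^ 2), ?_⟩
  rintro y ⟨u, rfl⟩
  exact mulVec_frob_bound A u.1 u.2

lemma le_opNorm (A : Matrix (Fin m) (Fin n) ℝ) {x : Fin n → ℝ} (hx : sqSum x = 1) :
    l2 (A.mulVec x) ≤ opNorm A :=
  le_ciSup (bddAbove_sphere A) (⟨x, hx⟩ : {x : Fin n → ℝ // sqSum x = 1})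

lemma opNorm_nonneg (A : Matrix (Fin m) (Fin n) ℝ) : 0 ≤ opNorm A := by
  rcases isEmpty_or_nonempty {x : Fin n → ℝ // sqSum x = 1} with h | h
  · unfold opNorm
    rw [Real.iSup_of_isEmpty]
  · obtain ⟨u⟩ := h
    exact (l2_nonneg _).trans (le_opNorm A u.2)

lemma l2_mulVec_le (A : Matrix (Fin m) (Fin n) ℝ) (x : Fin n → ℝ) :
    l2 (A.mulVec x) ≤ opNorm A * l2 x := by
  by_cases hx : l2 x = 0
  · have hx0 : x = 0 := l2_eq_zero hx
    rw [hx, mul_zero, hx0, Matrix.mulVec_zero]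
    unfold l2
    simp
  · have hxpos : 0 < l2 x := lt_of_le_of_ne (l2_nonneg x) (Ne.symm hx)
    set u := (l2 x)⁻¹ • x with hu_def
    have hu : sqSum u = 1 := by
      unfold sqSum
      rw [show (∑ i, u i ^ 2) = ((l2 x)⁻¹)^2 * ∑ i, x i ^ 2 by
        rw [Finset.mul_sum]; apply Finset.sum_congr rfl; intro i _
        simp [hu_def, smul_eq_mul]; ring]
      rw [← l2_sq x]
      field_simp
    have h1 : A.mulVec x = (l2 x) • A.mulVec u := by
      rw [hu_def, Matrix.mulVec_smul, smul_smul, mul_inv_cancel₀ hx, one_smul]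
    rw [h1, l2_smul, abs_of_pos hxpos]
    rw [mul_comm (opNorm A) (l2 x)]
    exact mul_le_mul_of_nonneg_left (le_opNorm A hu) hxpos.le

lemma l2_transpose_mulVec_le (A : Matrix (Fin m) (Fin n) ℝ) (z : Fin m → ℝ) :
    l2 (A.transpose.mulVec z) ≤ opNorm A * l2 z := by
  set w := A.transpose.mulVec z with hw_def
  by_cases hw : l2 w = 0
  · rw [hw]
    exact mul_nonneg (opNorm_nonneg A) (l2_nonneg z)
  · have hwpos : 0 < l2 w := lt_of_le_of_ne (l2_nonneg w) (Ne.symm hw)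
    have key : (l2 w)^2 ≤ l2 z * l2 (A.mulVec w) := by
      rw [l2_sq]
      have hfact : ∀ j, w j = ∑ i, A i j * z i := by
        intro j
        simp [hw_def, Matrix.mulVec, dotProduct, Matrix.transpose_apply]
      calc ∑ j, w j ^ 2 = ∑ j, ∑ i, z i * (A i j * w j) := by
            apply Finset.sum_congr rfl
            intro j _
            rw [show (∑ i, z i * (A i j * w j)) = (∑ i, A i j * z i) * w j by
              rw [Finset.sum_mul]; apply Finset.sum_congr rfl; intro i _; ring]
            rw [← hfact j]
            ring
        _ = ∑ i, ∑ j, z i * (A i j * w j) := Finset.sum_comm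
        _ = ∑ i, z i * (A.mulVec w) i := by
            apply Finset.sum_congr rfl
            intro i _
            rw [show (A.mulVec w) i = ∑ j, A i j * w j by
              simp [Matrix.mulVec, dotProduct]]
            rw [Finset.mul_sum]
        _ ≤ l2 z * l2 (A.mulVec w) := dot_le_l2 _ _
    have h2 : l2 (A.mulVec w) ≤ opNorm A * l2 w := l2_mulVec_le A w
    nlinarith [key, h2, l2_nonneg z, opNorm_nonneg A]

end LinAlg

section PM
open Cube LinAlg

variable {m n : ℕ}

def pm (b : Bool) : ℝ := if b then 1 else -1

def pmv {n : ℕ} (s : Fin n → Bool) : Fin n → ℝ := fun j => pm (s j)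

lemma pm_sq (b : Bool) : pm b ^ 2 = 1 := by cases b <;> simp [pm]

lemma pm_abs (b : Bool) : |pm b| = 1 := by cases b <;> simp [pm]

lemma pm_not (b : Bool) : pm (!b) = -pm b := by cases b <;> simp [pm]

lemma pmv_flip (j : Fin n) (s : Fin n → Bool) :
    pmv (Cube.flip j s) = Function.update (pmv s) j (-(pmv s j)) := by
  funext k
  by_cases h : k = j
  · subst h
    simp [pmv, Cube.flip, pm_not]
  · simp [pmv, Cube.flip, Function.update_of_ne h]

lemma pmv_sub_flip (j : Fin n) (s : Fin n → Bool) :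
    pmv s - pmv (Cube.flip j s) = Pi.single j (2 * pmv s j) := by
  rw [pmv_flip]
  funext k
  by_cases h : k = j
  · subst h
    simp [Function.update_self]
    ring
  · simp [Function.update_of_ne h, Pi.single_eq_of_ne h]

/-- the convexity/Lipschitz bound: sum of squared positive parts of discrete
gradient of `s ↦ ‖A (pmv s)‖` is at most `4‖A‖²`. -/
lemma grad_bound (A : Matrix (Fin m) (Fin n) ℝ) (s : Fin n → Bool) :
    ∑ j, (max (l2 (A.mulVec (pmv s)) - l2 (A.mulVec (pmv (Cube.flip j s)))) 0)^2
      ≤ 4 * opNorm A ^ 2 := by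
  set x := pmv s with hx_def
  set w := A.mulVec x with hw_def
  by_cases hw : l2 w = 0
  · have hz : ∀ j, (max (l2 (A.mulVec (pmv s)) - l2 (A.mulVec (pmv (Cube.flip j s)))) 0) = 0 := by
      intro j
      apply max_eq_right
      rw [hw]
      have := l2_nonneg (A.mulVec (pmv (Cube.flip j s)))
      linarith
    rw [Finset.sum_congr rfl (fun j _ => by rw [hz j])]
    simp
    positivity
  · have hwpos : 0 < l2 w := lt_of_le_of_ne (l2_nonneg w) (Ne.symm hw)
    set q := A.transpose.mulVec w with hq_def
    have key : ∀ j, (max (l2 (A.mulVec (pmv s)) - l2 (A.mulVec (pmv (Cube.flip j s)))) 0)^2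
        ≤ 4 * q j ^ 2 / (l2 w)^2 := by
      intro j
      set w' := A.mulVec (pmv (Cube.flip j s)) with hw'_def
      -- (l2 w - l2 w') * l2 w ≤ sqSum w - dot w w'
      have hCS : ∑ i, w i * w' i ≤ l2 w * l2 w' := dot_le_l2 w w'
      have hstep : (l2 w - l2 w') * l2 w ≤ ∑ i, (w i * w i - w i * w' i) := by
        rw [Finset.sum_sub_distrib]
        have : ∑ i, w i * w i = (l2 w)^2 := by
          rw [l2_sq]
          apply Finset.sum_congr rfl
          intro i _
          ring
        rw [this]
        nlinarith [hCS]
      -- compute ∑ i, w i * (w i - w' i) = 2 * x j * q j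
      have hdiff : ∑ i, (w i * w i - w i * w' i) = 2 * x j * q j := by
        have hsub : w - w' = fun i => A i j * (2 * pmv s j) := by
          rw [hw_def, hw'_def, ← Matrix.mulVec_sub, ← hx_def, pmv_sub_flip]
          exact Matrix.mulVec_single _ _ _
        have hqj : q j = ∑ i, A i j * w i := by
          simp [hq_def, Matrix.mulVec, dotProduct, Matrix.transpose_apply]
        calc ∑ i, (w i * w i - w i * w' i) = ∑ i, w i * (w - w') i := by
              apply Finset.sum_congr rfl
              intro i _
              simp [Pi.sub_apply]
              ring
          _ = ∑ i, w i * (A i j * (2 * pmv s j)) := by rw [hsub]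
          _ = 2 * x j * ∑ i, A i j * w i := by
              rw [Finset.mul_sum]
              apply Finset.sum_congr rfl
              intro i _
              rw [hx_def]
              ring
          _ = 2 * x j * q j := by rw [hqj]
      have habs : (l2 w - l2 w') * l2 w ≤ 2 * |q j| := by
        rw [hdiff] at hstep
        calc (l2 w - l2 w') * l2 w ≤ 2 * x j * q j := hstep
          _ ≤ |2 * x j * q j| := le_abs_self _
          _ = 2 * |q j| := by
              rw [abs_mul, abs_mul]
              rw [show |x j| = 1 from by rw [hx_def]; exact pm_abs (s j)]
              norm_num
      -- conclude
      have hmax : max (l2 w - l2 w') 0 ≤ 2 * |q j| / l2 w := by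
        apply max_le
        · rw [le_div_iff₀ hwpos]
          exact habs
        · positivity
      have h2 : (max (l2 w - l2 w') 0)^2 ≤ (2 * |q j| / l2 w)^2 := by
        apply pow_le_pow_left₀ (le_max_right _ _) hmax
      refine h2.trans (le_of_eq ?_)
      rw [div_pow, mul_pow, sq_abs]
      norm_num
    calc ∑ j, (max (l2 (A.mulVec (pmv s)) - l2 (A.mulVec (pmv (Cube.flip j s)))) 0)^2
        ≤ ∑ j, 4 * q j ^ 2 / (l2 w)^2 := Finset.sum_le_sum fun j _ => key j
      _ = 4 * (∑ j, q j ^ 2) / (l2 w)^2 := by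
          rw [Finset.mul_sum, Finset.sum_div]
      _ ≤ 4 * opNorm A ^ 2 := by
          rw [div_le_iff₀ (by positivity)]
          have hq2 : ∑ j, q j ^ 2 = (l2 q)^2 := (l2_sq q).symm
          have hqle : l2 q ≤ opNorm A * l2 w := l2_transpose_mulVec_le A w
          have := l2_nonneg q
          nlinarith [opNorm_nonneg A, l2_nonneg w]

/-- average of `‖A (pmv s)‖²` over the cube equals the squared Frobenius norm. -/
lemma avg_sq_eq (A : Matrix (Fin m) (Fin n) ℝ) :
    Cube.avg n (fun s => l2 (A.mulVec (pmv s)) ^ 2) = ∑ i, ∑ j, A i j ^ 2 := by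
  have key : ∀ (a : Fin n → ℝ),
      Cube.avg n (fun s => (∑ j, a j * pmv s j)^2) = ∑ j, a j ^ 2 := by
    intro a
    have e1 : (fun s => (∑ j, a j * pmv s j)^2) =
        (fun s => ∑ j, ∑ k, (a j * a k) * (pmv s j * pmv s k)) := by
      funext s
      rw [sq, Finset.sum_mul_sum]
      apply Finset.sum_congr rfl
      intro j _
      apply Finset.sum_congr rfl
      intro k _
      ring
    rw [e1, avg_sum, ]
    have e2 : ∀ j : Fin n, Cube.avg n (fun s => ∑ k, (a j * a k) * (pmv s j * pmv s k))
        = a j ^ 2 := by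
      intro j
      rw [avg_sum]
      rw [Finset.sum_eq_single j]
      · rw [show (fun s => a j * a j * (pmv s j * pmv s j)) =
            (fun s => (a j * a j) * (pmv s j * pmv s j)) from rfl, avg_smul]
        rw [show (fun s => pmv s j * pmv s j) = (fun _ => (1:ℝ)) from by
          funext s
          have := pm_sq (s j)
          simp only [pmv]
          nlinarith [pm_sq (s j)]]
        rw [avg_const]
        ring
      · intro k _ hkj
        rw [show (fun s => a j * a k * (pmv s j * pmv s k)) =
            (fun s => (a j * a k) * (pmv s j * pmv s k)) from rfl, avg_smul]
        have hzero : Cube.avg n (fun s => pmv s j * pmv s k) = 0 := by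
          have hflip := sum_flip j (fun s => pmv s j * pmv s k)
          have hneg : ∀ s, pmv (Cube.flip j s) j * pmv (Cube.flip j s) k
              = -(pmv s j * pmv s k) := by
            intro s
            rw [pmv_flip]
            rw [Function.update_self, Function.update_of_ne hkj]
            ring
          rw [Finset.sum_congr rfl (fun s _ => hneg s)] at hflip
          rw [Finset.sum_neg_distrib] at hflip
          unfold Cube.avg
          have : ∑ s, pmv s j * pmv s k = 0 := by linarith
          rw [this]
          simp
        rw [hzero, mul_zero]
      · intro h
        exact absurd (Finset.mem_univ j) h
    rw [Finset.sum_congr rfl (fun j _ => e2 j)]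
  have e3 : (fun s => l2 (A.mulVec (pmv s)) ^ 2) =
      (fun s => ∑ i, (∑ j, A i j * pmv s j)^2) := by
    funext s
    rw [l2_sq]
    apply Finset.sum_congr rfl
    intro i _
    rfl
  rw [e3, avg_sum]
  apply Finset.sum_congr rfl
  intro i _
  exact key (fun j => A i j)

lemma cube_final (m n : ℕ) (A : Matrix (Fin m) (Fin n) ℝ) (p : ℝ) (hp : 1 ≤ p) :
    (Cube.avg n (fun s => l2 (A.mulVec (pmv s)) ^ p)) ^ (1/p) ≤
      Real.sqrt (∑ i, ∑ j, A i j ^ 2) + 2 * Real.sqrt (2 * p) * opNorm A := by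
  have hp0 : (0:ℝ) < p := lt_of_lt_of_le one_pos hp
  by_cases hL : opNorm A = 0
  · have hZ0 : ∀ s : Fin n → Bool, l2 (A.mulVec (pmv s)) = 0 := by
      intro s
      have h1 := l2_mulVec_le A (pmv s)
      have h2 := l2_nonneg (A.mulVec (pmv s))
      rw [hL, zero_mul] at h1
      linarith
    rw [show (fun s : Fin n → Bool => l2 (A.mulVec (pmv s)) ^ p) = (fun _ => (0:ℝ)) from
      funext fun s => by rw [hZ0 s, Real.zero_rpow hp0.ne']]
    rw [Cube.avg_const, Real.zero_rpow (one_div_ne_zero hp0.ne')]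
    rw [hL, mul_zero, add_zero]
    exact Real.sqrt_nonneg _
  · have hL0 : 0 < opNorm A := lt_of_le_of_ne (opNorm_nonneg A) (Ne.symm hL)
    have hmain := Cube.cube_moment n (fun s => l2 (A.mulVec (pmv s)))
      (fun s => l2_nonneg _) (4 * opNorm A ^ 2) (by positivity)
      (fun s => grad_bound A s)
      (Real.sqrt (∑ i, ∑ j, A i j ^ 2)) (Real.sqrt_nonneg _)
      (by rw [Real.sq_sqrt (by positivity)]; exact le_of_eq (avg_sq_eq A)) p hp
    refine hmain.trans (le_of_eq ?_)
    congr 1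
    rw [show 2*p*(4 * opNorm A ^ 2) = (2*p) * (2 * opNorm A)^2 by ring]
    rw [Real.sqrt_mul (by positivity), Real.sqrt_sq (by positivity)]
    ring

open MeasureTheory ProbabilityTheory in
lemma integral_eq_avg {Ω : Type} [MeasurableSpace Ω] (μ : Measure Ω) [IsProbabilityMeasure μ]
    {n : ℕ} (σ : Ω → Fin n → ℝ)
    (hmeas : ∀ j, Measurable fun ω => σ ω j)
    (hhalf : ∀ j, μ {ω | σ ω j = 1} = 1 / 2 ∧ μ {ω | σ ω j = -1} = 1 / 2)
    (hindep : iIndepFun (fun (j : Fin n) (ω : Ω) => σ ω j) μ)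
    (G : (Fin n → ℝ) → ℝ) :
    ∫ ω, G (σ ω) ∂μ = Cube.avg n (fun s => G (pmv s)) := by
  classical
  set E : (Fin n → Bool) → Set Ω := fun s => ⋂ j, (fun ω => σ ω j) ⁻¹' {pmv s j} with hE
  have hEmeas : ∀ s, MeasurableSet (E s) :=
    fun s => MeasurableSet.iInter fun j => (hmeas j) (measurableSet_singleton _)
  have hprob : ∀ s, μ (E s) = ((1:ℝ≥0∞)/2) ^ n := by
    intro s
    rw [hE]
    rw [hindep.meas_iInter (fun j => ⟨{pmv s j}, measurableSet_singleton _, rfl⟩)]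
    have hval : ∀ j, μ ((fun ω => σ ω j) ⁻¹' {pmv s j}) = 1/2 := by
      intro j
      cases hsj : s j
      · have h := (hhalf j).2
        rw [show (fun ω => σ ω j) ⁻¹' {pmv s j} = {ω | σ ω j = -1} from by
          ext ω; simp [pmv, pm, hsj]]
        exact h
      · have h := (hhalf j).1
        rw [show (fun ω => σ ω j) ⁻¹' {pmv s j} = {ω | σ ω j = 1} from by
          ext ω; simp [pmv, pm, hsj]]
        exact h
    rw [Finset.prod_congr rfl (fun j _ => hval j), Finset.prod_const, Finset.card_univ,
      Fintype.card_fin]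
  have hG0 : ∀ᵐ ω ∂μ, ∀ j, σ ω j = 1 ∨ σ ω j = -1 := by
    rw [MeasureTheory.ae_all_iff]
    intro j
    have hm1 : MeasurableSet {ω | σ ω j = 1} := (hmeas j) (measurableSet_singleton 1)
    have hm2 : MeasurableSet {ω | σ ω j = -1} := (hmeas j) (measurableSet_singleton (-1))
    have hdisj : Disjoint {ω | σ ω j = 1} {ω | σ ω j = -1} := by
      rw [Set.disjoint_left]
      intro ω h1 h2
      simp only [Set.mem_setOf_eq] at h1 h2
      rw [h1] at h2
      norm_num at h2
    have h1 : μ ({ω | σ ω j = 1} ∪ {ω | σ ω j = -1}) = 1 := by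
      rw [measure_union hdisj hm2, (hhalf j).1, (hhalf j).2, ENNReal.add_halves]
    rw [MeasureTheory.ae_iff]
    have hset : {ω | ¬(σ ω j = 1 ∨ σ ω j = -1)} =
        ({ω | σ ω j = 1} ∪ {ω | σ ω j = -1})ᶜ := by
      ext ω
      simp [not_or]
    rw [hset, measure_compl (hm1.union hm2) (measure_ne_top μ _), h1]
    simp
  have hrepr : ∀ ω, (∀ j, σ ω j = 1 ∨ σ ω j = -1) →
      G (σ ω) = ∑ s, Set.indicator (E s) (fun _ => G (pmv s)) ω := by
    intro ω hω
    set s0 : Fin n → Bool := fun j => if σ ω j = 1 then true else false with hs0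
    have hmem : ω ∈ E s0 := by
      rw [hE]
      simp only [Set.mem_iInter, Set.mem_preimage, Set.mem_singleton_iff]
      intro j
      rcases hω j with h | h
      · simp [hs0, h, pmv, pm]
      · have hne : ¬ (σ ω j = 1) := by rw [h]; norm_num
        simp [hs0, h, hne, pmv, pm]
    have huniq : ∀ s, ω ∈ E s → s = s0 := by
      intro s hs
      funext j
      have h1 : σ ω j = pmv s j := by
        have := Set.mem_iInter.mp hs j
        simpa using this
      cases hsj : s j
      · have hval : σ ω j = -1 := by rw [h1]; simp [pmv, pm, hsj]
        have hne : ¬ (σ ω j = 1) := by rw [hval]; norm_num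
        simp [hs0, hne]
      · have hval : σ ω j = 1 := by rw [h1]; simp [pmv, pm, hsj]
        simp [hs0, hval]
    rw [Finset.sum_eq_single s0]
    · rw [Set.indicator_of_mem hmem]
      have hσ : σ ω = pmv s0 := by
        funext j
        have := Set.mem_iInter.mp hmem j
        simpa using this
      rw [hσ]
    · intro s _ hss0
      rw [Set.indicator_of_notMem]
      intro hc
      exact hss0 (huniq s hc)
    · intro h
      exact absurd (Finset.mem_univ _) h
  have haeeq : (fun ω => G (σ ω)) =ᵐ[μ]
      (fun ω => ∑ s, Set.indicator (E s) (fun _ => G (pmv s)) ω) :=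
    hG0.mono fun ω hω => hrepr ω hω
  rw [MeasureTheory.integral_congr_ae haeeq]
  rw [MeasureTheory.integral_finset_sum _
    (fun s _ => (MeasureTheory.integrable_const (G (pmv s))).indicator (hEmeas s))]
  have hint : ∀ s : Fin n → Bool, ∫ ω, Set.indicator (E s) (fun _ => G (pmv s)) ω ∂μ
      = ((1:ℝ)/2)^n * G (pmv s) := by
    intro s
    rw [MeasureTheory.integral_indicator_const _ (hEmeas s), Measure.real, hprob s]
    rw [smul_eq_mul]
    congr 1
    rw [ENNReal.toReal_pow]
    norm_num
  rw [Finset.sum_congr rfl (fun s _ => hint s)]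
  rw [← Finset.mul_sum]
  unfold Cube.avg
  rw [div_pow, one_pow, one_div, inv_mul_eq_div]

end PM

/-- Moment bound for `‖Aσ‖₂` with `σ` a Rademacher vector. -/
theorem rademacher_matrix_moment :
    ∀ (m n : ℕ) (A : Matrix (Fin m) (Fin n) ℝ)
      (Ω : Type) [MeasurableSpace Ω] (μ : Measure Ω), IsProbabilityMeasure μ →
    ∀ σ : Ω → Fin n → ℝ,
      (∀ j, Measurable fun ω => σ ω j) →
      (∀ j, μ {ω | σ ω j = 1} = 1 / 2 ∧ μ {ω | σ ω j = -1} = 1 / 2) →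
      iIndepFun (fun (j : Fin n) (ω : Ω) => σ ω j) μ →
    ∀ p : ℝ, 1 ≤ p →
      (∫ ω, l2 (A.mulVec (σ ω)) ^ p ∂μ) ^ (1 / p) ≤
        Real.sqrt (∑ i, ∑ j, A i j ^ 2) + 2 * Real.sqrt (2 * p) * opNorm A := by
  intro m n A Ω _ μ hμ σ hmeas hhalf hindep p hp
  haveI := hμ
  rw [show (∫ ω, l2 (A.mulVec (σ ω)) ^ p ∂μ)
      = Cube.avg n (fun s => l2 (A.mulVec (pmv s)) ^ p) from
    integral_eq_avg μ σ hmeas hhalf hindep (fun x => l2 (A.mulVec x) ^ p)]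
  exact cube_final m n A p hp


end SDR
end
end
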